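/- arXiv:1304.3971 — 8 statements merged into one kernel-verified Lean document; each statement's English description precedes it below -/
import Mathlib

section
/- Let p be a prime and m a nonnegative even integer. The number of invertible alternating m×m matrices over F_p (alternating meaning zero diagonal and A^t = -A) divided by the total number of alternating m×m matrices over F_p equals ∏_{i=1}^{m/2} (1 - p^{1-2i}). -/
set_option linter.unusedSectionVars false

/-- An alternating matrix: zero diagonal and `Aᵀ = -A`. -/
def Matrix.IsAlternating {n : Type*} [Fintype n] [DecidableEq n] {R : Type*} [Ring R]
    (A : Matrix n n R) : Prop :=
  A.transpose = -A ∧ ∀ i, A i i = 0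

namespace AltCount

open Matrix

variable {K : Type*} [Field K] [Fintype K] [DecidableEq K]
variable {α : Type*} [Fintype α] [DecidableEq α]

/-- bordered matrix -/
def Amat (φ : α → K) (C : Matrix α α K) : Matrix (Unit ⊕ α) (Unit ⊕ α) K :=
  Matrix.fromBlocks 0 (Matrix.of fun _ j => φ j) (Matrix.of fun i _ => -φ i) C

@[simp] lemma Amat_ll (φ : α → K) (C : Matrix α α K) (u u' : Unit) :
    Amat φ C (Sum.inl u) (Sum.inl u') = 0 := rfl

@[simp] lemma Amat_lr (φ : α → K) (C : Matrix α α K) (u : Unit) (j : α) :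
    Amat φ C (Sum.inl u) (Sum.inr j) = φ j := rfl

@[simp] lemma Amat_rl (φ : α → K) (C : Matrix α α K) (i : α) (u : Unit) :
    Amat φ C (Sum.inr i) (Sum.inl u) = -φ i := rfl

@[simp] lemma Amat_rr (φ : α → K) (C : Matrix α α K) (i j : α) :
    Amat φ C (Sum.inr i) (Sum.inr j) = C i j := rfl

lemma isAlt_amat {φ : α → K} {C : Matrix α α K} :
    (Amat φ C).IsAlternating ↔ C.IsAlternating := by
  constructor
  · rintro ⟨ht, hd⟩
    refine ⟨?_, fun i => by simpa using hd (Sum.inr i)⟩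
    ext i j
    have := congrFun (congrFun ht (Sum.inr i)) (Sum.inr j)
    simpa using this
  · rintro ⟨ht, hd⟩
    constructor
    · ext i j
      rcases i with i | i <;> rcases j with j | j <;>
        simp [Matrix.transpose_apply]
      simpa using congrFun (congrFun ht i) j
    · rintro (i | i) <;> simp [hd]

lemma eq_amat {A : Matrix (Unit ⊕ α) (Unit ⊕ α) K} (h : A.IsAlternating) :
    A = Amat (fun j => A (Sum.inl ()) (Sum.inr j)) (A.submatrix Sum.inr Sum.inr) := by
  ext i j
  rcases i with i | i <;> rcases j with j | j
  · cases i; cases j; simpa using h.2 (Sum.inl ())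
  · cases i; rfl
  · cases j
    have := congrFun (congrFun h.1 (Sum.inl ())) (Sum.inr i)
    simpa using this
  · rfl

/-- decomposition equivalence -/
noncomputable def decompEquiv (P : Matrix (Unit ⊕ α) (Unit ⊕ α) K → Prop) :
    {A : Matrix (Unit ⊕ α) (Unit ⊕ α) K // A.IsAlternating ∧ P A} ≃
    {x : (α → K) × Matrix α α K // x.2.IsAlternating ∧ P (Amat x.1 x.2)} where
  toFun A := ⟨⟨fun j => A.1 (Sum.inl ()) (Sum.inr j), A.1.submatrix Sum.inr Sum.inr⟩, by
    obtain ⟨hA, hP⟩ := A.2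
    exact ⟨isAlt_amat.mp (eq_amat hA ▸ hA), eq_amat hA ▸ hP⟩⟩
  invFun x := ⟨Amat x.1.1 x.1.2, isAlt_amat.mpr x.2.1, x.2.2⟩
  left_inv A := Subtype.ext (eq_amat A.2.1).symm
  right_inv x := by
    apply Subtype.ext
    exact Prod.ext rfl rfl

end AltCount
section C2
namespace AltCount
open Matrix
variable {K : Type*} [Field K] [Fintype K] [DecidableEq K]
variable {α : Type*} [Fintype α] [DecidableEq α]

lemma isAlt_conj {C : Matrix α α K} (h : C.IsAlternating) (Q : Matrix α α K) :
    (Qᵀ * C * Q).IsAlternating := by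
  constructor
  · have : (Qᵀ * C * Q)ᵀ = Qᵀ * Cᵀ * Q := by
      rw [Matrix.transpose_mul, Matrix.transpose_mul, Matrix.transpose_transpose, mul_assoc]
    rw [this, h.1, Matrix.mul_neg, Matrix.neg_mul]
  · intro i
    have hCs : ∀ j k : α, C k j = - C j k := fun j k => by
      simpa using congrFun (congrFun h.1 j) k
    have expand : (Qᵀ * C * Q) i i = ∑ x ∈ Finset.univ ×ˢ Finset.univ,
        Q x.1 i * C x.1 x.2 * Q x.2 i := by
      rw [Finset.sum_product]
      simp only [Matrix.mul_apply, Matrix.transpose_apply, Finset.sum_mul]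
      exact Finset.sum_comm
    rw [expand]
    refine Finset.sum_involution (fun a _ => (a.2, a.1)) ?_ ?_
      (fun a ha => Finset.mem_product.2 ⟨Finset.mem_univ _, Finset.mem_univ _⟩)
      (fun a ha => rfl)
    · rintro ⟨j, k⟩ -
      simp only
      rw [hCs j k]
      ring
    · rintro ⟨j, k⟩ - hf
      intro heq
      have hjk : k = j := by simpa using congrArg Prod.fst heq
      apply hf
      subst hjk
      simp [h.2]

lemma amat_conj (φ : α → K) (C Q : Matrix α α K) :
    (Matrix.fromBlocks (1 : Matrix Unit Unit K) 0 0 Q)ᵀ * Amat φ C *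
      Matrix.fromBlocks 1 0 0 Q = Amat (Matrix.vecMul φ Q) (Qᵀ * C * Q) := by
  ext i j
  rcases i with i | i <;> rcases j with j | j <;>
    simp [Amat, Matrix.fromBlocks, Matrix.mul_apply, Fintype.sum_sum_type,
      Matrix.vecMul, dotProduct, Finset.sum_mul, Finset.mul_sum,
      mul_comm, mul_left_comm]

lemma det_P (Q : Matrix α α K) :
    (Matrix.fromBlocks (1 : Matrix Unit Unit K) 0 0 Q).det = Q.det := by
  rw [Matrix.det_fromBlocks_zero₂₁]; simp

lemma isUnit_amat_conj (φ : α → K) (C Q : Matrix α α K) (hQ : IsUnit Q.det) :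
    IsUnit (Amat (Matrix.vecMul φ Q) (Qᵀ * C * Q)).det ↔ IsUnit (Amat φ C).det := by
  rw [← amat_conj, Matrix.det_mul, Matrix.det_mul, Matrix.det_transpose, det_P]
  simp only [IsUnit.mul_iff]
  tauto

/-- congruence equivalence on bordered alternating invertible matrices -/
noncomputable def conjEquiv (ψ : α → K) (Q : Matrix α α K) (hQ : IsUnit Q.det) :
    {C : Matrix α α K // C.IsAlternating ∧ IsUnit (Amat ψ C).det} ≃
    {C : Matrix α α K // C.IsAlternating ∧ IsUnit (Amat (Matrix.vecMul ψ Q) C).det} where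
  toFun C := ⟨Qᵀ * C.1 * Q, isAlt_conj C.2.1 Q, (isUnit_amat_conj ψ C.1 Q hQ).mpr C.2.2⟩
  invFun C := ⟨Q⁻¹ᵀ * C.1 * Q⁻¹, isAlt_conj C.2.1 Q⁻¹, by
    have h2 : IsUnit (Amat (Matrix.vecMul (Matrix.vecMul ψ Q) Q⁻¹) (Q⁻¹ᵀ * C.1 * Q⁻¹)).det ↔
        IsUnit (Amat (Matrix.vecMul ψ Q) C.1).det :=
      isUnit_amat_conj _ C.1 Q⁻¹ ((Matrix.isUnit_nonsing_inv_det_iff).mpr hQ)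
    rw [Matrix.vecMul_vecMul, Matrix.mul_nonsing_inv _ hQ, Matrix.vecMul_one] at h2
    exact h2.mpr C.2.2⟩
  left_inv C := by
    apply Subtype.ext
    simp only
    rw [Matrix.transpose_nonsing_inv]
    calc (Qᵀ)⁻¹ * (Qᵀ * C.1 * Q) * Q⁻¹
        = ((Qᵀ)⁻¹ * Qᵀ) * C.1 * (Q * Q⁻¹) := by
          simp only [mul_assoc]
      _ = C.1 := by
          rw [Matrix.nonsing_inv_mul _ (by simpa using hQ), Matrix.mul_nonsing_inv _ hQ]
          simp
  right_inv C := by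
    apply Subtype.ext
    simp only
    rw [Matrix.transpose_nonsing_inv]
    calc Qᵀ * ((Qᵀ)⁻¹ * C.1 * Q⁻¹) * Q
        = (Qᵀ * (Qᵀ)⁻¹) * C.1 * (Q⁻¹ * Q) := by
          simp only [mul_assoc]
      _ = C.1 := by
          rw [Matrix.mul_nonsing_inv _ (by simpa using hQ), Matrix.nonsing_inv_mul _ hQ]
          simp

end AltCount
end C2
section C3
namespace AltCount
open Matrix
variable {K : Type*} [Field K] [Fintype K] [DecidableEq K]
variable {α : Type*} [Fintype α] [DecidableEq α]

lemma exists_unit_row (i₀ : α) {φ : α → K} (hφ : φ ≠ 0) :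
    ∃ Q : Matrix α α K, IsUnit Q.det ∧ Matrix.vecMul (Pi.single i₀ (1 : K)) Q = φ := by
  obtain ⟨j₀, hj₀⟩ : ∃ j, φ j ≠ 0 := by
    by_contra h; push_neg at h; exact hφ (funext h)
  set Q : Matrix α α K := Matrix.of fun i k =>
    if i = i₀ then φ k else if i = j₀ then (if k = i₀ then 1 else 0)
    else if k = i then (1 : K) else 0 with hQdef
  have hrow : ∀ k, Q i₀ k = φ k := fun k => by simp [hQdef]
  refine ⟨Q, ?_, by rw [Matrix.single_one_vecMul]; exact funext hrow⟩
  rw [isUnit_iff_ne_zero]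
  intro hdet
  obtain ⟨v, hv0, hvk⟩ := Matrix.exists_mulVec_eq_zero_iff.mpr hdet
  have row : ∀ i, ∑ k, Q i k * v k = 0 := fun i => congrFun hvk i
  have h1 : ∀ i, i ≠ i₀ → i ≠ j₀ → v i = 0 := by
    intro i hi hj
    have := row i
    simpa [hQdef, hi, hj, ite_mul, Finset.sum_ite_eq'] using this
  have hzero : ∀ i, v i = 0 := by
    by_cases hji : j₀ = i₀
    · subst hji
      have hvi : ∀ i, i ≠ j₀ → v i = 0 := fun i hi => h1 i hi hi
      have := row j₀
      rw [Finset.sum_eq_single j₀ (fun k _ hk => by rw [hvi k hk, mul_zero])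
        (fun h => absurd (Finset.mem_univ j₀) h)] at this
      rw [hrow] at this
      have hvj : v j₀ = 0 := by
        rcases mul_eq_zero.mp this with h | h
        · exact absurd h hj₀
        · exact h
      intro i
      by_cases hi : i = j₀
      · rw [hi]; exact hvj
      · exact hvi i hi
    · have hvi₀ : v i₀ = 0 := by
        have := row j₀
        simpa [hQdef, hji, ite_mul, Finset.sum_ite_eq'] using this
      have hvi : ∀ i, i ≠ j₀ → v i = 0 := by
        intro i hi
        by_cases hii : i = i₀
        · rw [hii]; exact hvi₀
        · exact h1 i hii hi
      have := row i₀
      rw [Finset.sum_eq_single j₀ (fun k _ hk => by rw [hvi k hk, mul_zero])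
        (fun h => absurd (Finset.mem_univ j₀) h)] at this
      rw [hrow] at this
      have hvj : v j₀ = 0 := by
        rcases mul_eq_zero.mp this with h | h
        · exact absurd h hj₀
        · exact h
      intro i
      by_cases hi : i = j₀
      · rw [hi]; exact hvj
      · exact hvi i hi
  exact hv0 (funext hzero)

lemma isUnit_amat_amat (w : α → K) (D : Matrix α α K) :
    IsUnit (Amat (Pi.single (Sum.inl ()) (1 : K)) (Amat w D)).det ↔ IsUnit D.det := by
  rw [isUnit_iff_ne_zero, isUnit_iff_ne_zero, not_iff_not.symm, not_not, not_not]
  set e : Unit ⊕ α → K := Pi.single (Sum.inl ()) (1 : K) with he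
  have he1 : e (Sum.inl ()) = 1 := by simp [he]
  have he2 : ∀ j : α, e (Sum.inr j) = 0 := fun j => by simp [he]
  constructor
  · rintro hdet
    obtain ⟨v, hv0, hvk⟩ := Matrix.exists_mulVec_eq_zero_iff.mpr hdet
    have row : ∀ i, ∑ k, Amat e (Amat w D) i k * v k = 0 := fun i => congrFun hvk i
    set c := v (Sum.inl ()) with hc
    set d := v (Sum.inr (Sum.inl ())) with hd
    set x : α → K := fun j => v (Sum.inr (Sum.inr j)) with hx
    have hd0 : d = 0 := by
      have := row (Sum.inl ())
      simpa [Fintype.sum_sum_type, he1, he2, hd] using this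
    have hDx : ∀ i, ∑ j, D i j * x j = 0 := by
      intro i
      have := row (Sum.inr (Sum.inr i))
      simpa [Fintype.sum_sum_type, he2, hd0, ← hd, hx] using this
    have hxne : x ≠ 0 := by
      intro hx0
      have hc0 : c = 0 := by
        have h2 := row (Sum.inr (Sum.inl ()))
        have hx0' : ∀ j, v (Sum.inr (Sum.inr j)) = 0 := fun j => congrFun hx0 j
        simpa [Fintype.sum_sum_type, he1, hd0, ← hd, hx0', ← hc, neg_eq_zero] using h2
      apply hv0
      funext i
      rcases i with i | i
      · cases i; exact hc0
      · rcases i with i | i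
        · cases i; exact hd0
        · exact congrFun hx0 i
    rw [← Matrix.exists_mulVec_eq_zero_iff]
    exact ⟨x, hxne, funext hDx⟩
  · rintro hdet
    obtain ⟨x, hx0, hxk⟩ := Matrix.exists_mulVec_eq_zero_iff.mpr hdet
    have hDx : ∀ i, ∑ j, D i j * x j = 0 := fun i => congrFun hxk i
    rw [← Matrix.exists_mulVec_eq_zero_iff]
    refine ⟨Sum.elim (fun _ => ∑ j, w j * x j) (Sum.elim (fun _ => 0) x), ?_, ?_⟩
    · intro h
      obtain ⟨j, hj⟩ : ∃ j, x j ≠ 0 := by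
        by_contra hc; push_neg at hc; exact hx0 (funext hc)
      exact hj (congrFun h (Sum.inr (Sum.inr j)))
    · funext i
      rcases i with i | i
      · cases i
        simp [Matrix.mulVec, dotProduct, Fintype.sum_sum_type, he1, he2]
      · rcases i with i | i
        · cases i
          simp [Matrix.mulVec, dotProduct, Fintype.sum_sum_type, he1, he2]
        · simp [Matrix.mulVec, dotProduct, Fintype.sum_sum_type, he2, hDx i]

end AltCount
end C3
section C4
namespace AltCount
open Matrix
variable {K : Type*} [Field K] [Fintype K] [DecidableEq K]
variable {α : Type*} [Fintype α] [DecidableEq α]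

variable (K) in
noncomputable def Ninv (β : Type*) [Fintype β] [DecidableEq β] : ℕ :=
  Nat.card {A : Matrix β β K // A.IsAlternating ∧ IsUnit A.det}

lemma isAlt_reindex {β γ : Type*} [Fintype β] [DecidableEq β] [Fintype γ] [DecidableEq γ]
    (e : β ≃ γ) {A : Matrix β β K} (h : A.IsAlternating) :
    ((Matrix.reindex e e) A).IsAlternating := by
  refine ⟨?_, fun i => h.2 (e.symm i)⟩
  ext i j
  simpa using congrFun (congrFun h.1 (e.symm i)) (e.symm j)

lemma Ninv_reindex {β γ : Type*} [Fintype β] [DecidableEq β] [Fintype γ] [DecidableEq γ]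
    (e : β ≃ γ) : Ninv K β = Ninv K γ := by
  refine Nat.card_congr (Equiv.subtypeEquiv (Matrix.reindex e e) fun A => ?_)
  constructor
  · rintro ⟨h1, h2⟩
    exact ⟨isAlt_reindex e h1, by rwa [Matrix.det_reindex_self]⟩
  · rintro ⟨h1, h2⟩
    have h3 := isAlt_reindex e.symm h1
    rw [show (Matrix.reindex e.symm e.symm) ((Matrix.reindex e e) A) = A by
      simp [Matrix.reindex_apply, Matrix.submatrix_submatrix]] at h3
    refine ⟨h3, ?_⟩
    rwa [Matrix.det_reindex_self] at h2

def prodSub {A B : Type*} (Q : B → Prop) : {x : A × B // Q x.2} ≃ A × {b // Q b} where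
  toFun x := (x.1.1, ⟨x.1.2, x.2⟩)
  invFun y := ⟨(y.1, y.2.1), y.2.2⟩
  left_inv _ := rfl
  right_inv _ := rfl

lemma Ninv_zero : Ninv K (Fin 0) = 1 := by
  have : Unique {A : Matrix (Fin 0) (Fin 0) K // A.IsAlternating ∧ IsUnit A.det} := by
    refine ⟨⟨⟨0, ⟨by ext i j; exact absurd i.2 (by omega), fun i => absurd i.2 (by omega)⟩,
      by simp [Matrix.det_fin_zero]⟩⟩, ?_⟩
    rintro ⟨A, hA⟩
    apply Subtype.ext
    ext i j
    exact absurd i.2 (by omega)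
  exact Nat.card_unique

lemma Ninv_rec (m : ℕ) :
    Ninv K (Fin (m + 2)) =
      (Fintype.card K ^ (m + 1) - 1) * (Fintype.card K ^ m * Ninv K (Fin m)) := by
  classical
  set ι := Unit ⊕ Fin m with hι
  have ecard : Fintype.card (Fin (m + 2)) = Fintype.card (Unit ⊕ ι) := by
    simp [hι]; omega
  obtain ⟨e⟩ := Fintype.card_eq.mp ecard
  rw [Ninv_reindex e]
  set e₀ : ι → K := Pi.single (Sum.inl ()) (1 : K) with he₀
  have he₀ne : e₀ ≠ 0 := by
    intro h
    have := congrFun h (Sum.inl ())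
    simp [he₀] at this
  -- step 1 : decompose
  have step1 : Ninv K (Unit ⊕ ι) =
      Nat.card ((φ : ι → K) × {C : Matrix ι ι K // C.IsAlternating ∧ IsUnit (Amat φ C).det}) := by
    refine Nat.card_congr ?_
    exact (decompEquiv fun A => IsUnit A.det).trans
      (Equiv.subtypeProdEquivSigmaSubtype
        (fun (φ : ι → K) (C : Matrix ι ι K) => C.IsAlternating ∧ IsUnit (Amat φ C).det))
  -- fibers
  have fib0 : IsEmpty {C : Matrix ι ι K // C.IsAlternating ∧ IsUnit (Amat 0 C).det} := by
    refine ⟨fun C => ?_⟩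
    have : (Amat (0 : ι → K) C.1).det = 0 :=
      Matrix.det_eq_zero_of_row_eq_zero (Sum.inl ()) (by rintro (j | j) <;> simp)
    exact C.2.2.ne_zero this
  have fib : ∀ φ : ι → K, φ ≠ 0 →
      Nat.card {C : Matrix ι ι K // C.IsAlternating ∧ IsUnit (Amat φ C).det} =
      Nat.card {C : Matrix ι ι K // C.IsAlternating ∧ IsUnit (Amat e₀ C).det} := by
    intro φ hφ
    obtain ⟨Q, hQ, hQrow⟩ := exists_unit_row (Sum.inl ()) hφ
    have := Nat.card_congr (conjEquiv e₀ Q hQ)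
    rwa [show Matrix.vecMul e₀ Q = φ from hQrow, eq_comm] at this
  -- sum over fibers
  have step2 : Nat.card ((φ : ι → K) × {C : Matrix ι ι K // C.IsAlternating ∧ IsUnit (Amat φ C).det})
      = (Fintype.card K ^ (m + 1) - 1) *
        Nat.card {C : Matrix ι ι K // C.IsAlternating ∧ IsUnit (Amat e₀ C).det} := by
    rw [Nat.card_eq_fintype_card, Fintype.card_sigma]
    have hterm : ∀ φ : ι → K,
        Fintype.card {C : Matrix ι ι K // C.IsAlternating ∧ IsUnit (Amat φ C).det} =
        if φ = 0 then 0 else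
          Fintype.card {C : Matrix ι ι K // C.IsAlternating ∧ IsUnit (Amat e₀ C).det} := by
      intro φ
      by_cases h : φ = 0
      · subst h
        rw [if_pos rfl]
        exact Fintype.card_eq_zero_iff.mpr fib0
      · rw [if_neg h, ← Nat.card_eq_fintype_card, ← Nat.card_eq_fintype_card]
        exact fib φ h
    rw [Finset.sum_congr rfl fun φ _ => hterm φ, Finset.sum_ite, Finset.sum_const,
      Finset.sum_const, Finset.filter_ne', Finset.card_erase_of_mem (Finset.mem_univ _)]
    simp only [smul_eq_mul, mul_zero, zero_add, Finset.card_univ, Nat.card_eq_fintype_card]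
    congr 2
    simp [hι]
    ring
  -- compute the base fiber
  have step3 : Nat.card {C : Matrix ι ι K // C.IsAlternating ∧ IsUnit (Amat e₀ C).det} =
      Fintype.card K ^ m * Ninv K (Fin m) := by
    have equ : {C : Matrix ι ι K // C.IsAlternating ∧ IsUnit (Amat e₀ C).det} ≃
        (Fin m → K) × {D : Matrix (Fin m) (Fin m) K // D.IsAlternating ∧ IsUnit D.det} := by
      refine ((decompEquiv fun C => IsUnit (Amat e₀ C).det).trans ?_)
      refine (Equiv.subtypeEquivRight fun x => ?_).trans (prodSub _)
      constructor
      · rintro ⟨h1, h2⟩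
        exact ⟨h1, (isUnit_amat_amat x.1 x.2).mp h2⟩
      · rintro ⟨h1, h2⟩
        exact ⟨h1, (isUnit_amat_amat x.1 x.2).mpr h2⟩
    rw [Nat.card_congr equ, Nat.card_prod, Nat.card_fun]
    simp [Ninv, Nat.card_eq_fintype_card]
  rw [step1, step2, step3]
end AltCount
end C4
section C5
namespace AltCount
open Matrix
variable {K : Type*} [Field K] [Fintype K] [DecidableEq K]

/-- equivalence between alternating matrices and strict-upper-triangle functions -/
def altEquivFun (m : ℕ) :
    {A : Matrix (Fin m) (Fin m) K // A.IsAlternating} ≃ ({q : Fin m × Fin m // q.1 < q.2} → K) where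
  toFun A q := A.1 q.1.1 q.1.2
  invFun f := ⟨Matrix.of fun i j =>
      if h : i < j then f ⟨(i, j), h⟩ else if h' : j < i then -f ⟨(j, i), h'⟩ else 0, by
    constructor
    · ext i j
      rcases lt_trichotomy i j with h | h | h
      · simp [Matrix.transpose_apply, h, h.asymm, not_lt_of_gt]
      · subst h; simp
      · simp [Matrix.transpose_apply, h, h.asymm, not_lt_of_gt]
    · intro i; simp⟩
  left_inv A := by
    apply Subtype.ext
    ext i j
    rcases lt_trichotomy i j with h | h | h
    · simp [h]
    · subst h; simp [A.2.2 i]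
    · have := congrFun (congrFun A.2.1 j) i
      simp only [Matrix.transpose_apply, Pi.neg_apply, Matrix.neg_apply] at this
      simp [h, h.asymm, this]
  right_inv f := by
    funext q
    obtain ⟨⟨i, j⟩, hq⟩ := q
    simp [hq]

def ltPairsEquiv (m : ℕ) : {q : Fin m × Fin m // q.1 < q.2} ≃ Σ j : Fin m, Fin j.1 where
  toFun q := ⟨q.1.2, ⟨q.1.1.1, q.2⟩⟩
  invFun s := ⟨(⟨s.2.1, s.2.2.trans s.1.2⟩, s.1), s.2.2⟩
  left_inv q := rfl
  right_inv s := rfl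

lemma sum_4i1 (n : ℕ) : ∑ i ∈ Finset.range n, (4 * i + 1) = n * (2 * n - 1) := by
  induction n with
  | zero => simp
  | succ n ih =>
    rw [Finset.sum_range_succ, ih]
    rcases n with _ | k
    · simp
    · have h1 : 2 * (k + 1) - 1 = 2 * k + 1 := by omega
      have h2 : 2 * (k + 1 + 1) - 1 = 2 * k + 3 := by omega
      rw [h1, h2]; ring

lemma card_alt (m : ℕ) :
    Nat.card {A : Matrix (Fin m) (Fin m) K // A.IsAlternating} =
      Fintype.card K ^ (m * (m - 1) / 2) := by
  rw [Nat.card_congr (altEquivFun (K := K) m), Nat.card_fun, Nat.card_eq_fintype_card,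
    Nat.card_eq_fintype_card]
  congr 1
  rw [Fintype.card_congr (ltPairsEquiv m), Fintype.card_sigma]
  simp only [Fintype.card_fin]
  rw [show (∑ x : Fin m, (x : ℕ)) = ∑ i ∈ Finset.range m, i from
    Fin.sum_univ_eq_sum_range (fun i => i) m, Finset.sum_range_id]

end AltCount
end C5
section C6
namespace AltCount
open Matrix
variable {K : Type*} [Field K] [Fintype K] [DecidableEq K]

lemma Ninv_prod (n : ℕ) :
    (Ninv K (Fin (2 * n)) : ℝ) = ∏ i ∈ Finset.range n,
      ((Fintype.card K : ℝ) ^ (2 * i) * ((Fintype.card K : ℝ) ^ (2 * i + 1) - 1)) := by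
  induction n with
  | zero =>
    rw [show 2 * 0 = 0 from rfl, Ninv_zero]
    simp
  | succ n ih =>
    have hcast : ((Fintype.card K ^ (2 * n + 1) - 1 : ℕ) : ℝ) =
        (Fintype.card K : ℝ) ^ (2 * n + 1) - 1 := by
      rw [Nat.cast_sub (Nat.one_le_pow _ _ Fintype.card_pos)]
      push_cast
      ring
    rw [show 2 * (n + 1) = 2 * n + 2 from by ring, Ninv_rec (2 * n),
      Finset.prod_range_succ, ← ih]
    push_cast [hcast]
    ring

end AltCount

/-- The proportion of invertible alternating `m × m` matrices over `𝔽_p`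
among all alternating `m × m` matrices equals `∏_{i=1}^{m/2} (1 - p^{1-2i})`. -/
theorem stmt0 (p m : ℕ) (hp : p.Prime) (hm : Even m) :
    (Nat.card {A : Matrix (Fin m) (Fin m) (ZMod p) // A.IsAlternating ∧ IsUnit A.det} : ℝ) /
      (Nat.card {A : Matrix (Fin m) (Fin m) (ZMod p) // A.IsAlternating} : ℝ) =
    ∏ i ∈ Finset.range (m / 2), (1 - (p : ℝ) ^ ((1 : ℤ) - 2 * ((i : ℤ) + 1))) := by
  haveI : Fact p.Prime := ⟨hp⟩
  set n := m / 2 with hn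
  have hm2 : m = 2 * n := by
    rw [hn]; rcases hm with ⟨k, hk⟩; omega
  have hnum : Nat.card {A : Matrix (Fin m) (Fin m) (ZMod p) // A.IsAlternating ∧ IsUnit A.det} =
      AltCount.Ninv (ZMod p) (Fin m) := rfl
  have hp0 : (p : ℝ) ≠ 0 := Nat.cast_ne_zero.mpr hp.pos.ne'
  have hcardK : (Fintype.card (ZMod p) : ℝ) = (p : ℝ) := by rw [ZMod.card]
  rw [hnum, AltCount.card_alt, hm2, AltCount.Ninv_prod n]
  have hden : ((Fintype.card (ZMod p) ^ (2 * n * (2 * n - 1) / 2) : ℕ) : ℝ) =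
      ∏ i ∈ Finset.range n, (p : ℝ) ^ (4 * i + 1) := by
    rw [Finset.prod_pow_eq_pow_sum, AltCount.sum_4i1]
    push_cast [hcardK]
    congr 1
    rw [show 2 * n * (2 * n - 1) = 2 * (n * (2 * n - 1)) from by
        rcases n with _ | k
        · simp
        · have h1 : 2 * (k + 1) - 1 = 2 * k + 1 := by omega
          rw [h1]; ring]
    exact Nat.mul_div_cancel_left _ two_pos
  rw [hden, ← Finset.prod_div_distrib]
  refine Finset.prod_congr rfl fun i _ => ?_
  rw [hcardK]
  have hexp : (1 : ℤ) - 2 * ((i : ℤ) + 1) = -((2 * i + 1 : ℕ) : ℤ) := by push_cast; ring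
  rw [hexp, zpow_neg, zpow_natCast]
  have hpow : (p : ℝ) ^ (2 * i + 1) ≠ 0 := pow_ne_zero _ hp0
  field_simp
  ring
end C6
end

section
/- For a nonnegative even integer m and prime p, the number of invertible alternating m×m matrices over F_p satisfies the recursion #GL_m(F_p)_alt = (p^{m-1} - 1) · p^{m-2} · #GL_{m-2}(F_p)_alt, with #GL_0(F_p)_alt = 1. -/
open Matrix
set_option linter.unusedSectionVars false

section Quad
variable {ι : Type*} [Fintype ι] [DecidableEq ι] {R : Type*} [CommRing R]

lemma alt_quad {A : Matrix ι ι R} (hA : A.IsAlternating) (x : ι → R) :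
    x ⬝ᵥ A.mulVec x = 0 := by
  have h : x ⬝ᵥ A.mulVec x = ∑ q : ι × ι, x q.1 * A q.1 q.2 * x q.2 := by
    simp [dotProduct, Matrix.mulVec, Fintype.sum_prod_type, Finset.mul_sum, mul_assoc]
  rw [h]
  refine Finset.sum_ninvolution (fun q => (q.2, q.1)) ?_ ?_ (fun _ => Finset.mem_univ _)
    (fun q => rfl)
  · intro q
    have h2 : A q.2 q.1 = - A q.1 q.2 := by
      conv_lhs => rw [← Matrix.transpose_apply A, hA.1]
      simp
    rw [h2]; ring
  · intro q hq
    have hne : q.1 ≠ q.2 := by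
      rintro h12
      exact hq (by rw [← h12, hA.2]; ring)
    intro h
    exact hne (congrArg Prod.fst h).symm

lemma conj_apply_diag (u A : Matrix ι ι R) (i : ι) :
    (u * A * uᵀ) i i = (u i) ⬝ᵥ A.mulVec (u i) := by
  have h1 : (u * A * uᵀ) i i = ∑ y : ι, ∑ x : ι, u i x * (A x y * u i y) := by
    simp [Matrix.mul_apply, Finset.sum_mul, mul_assoc]
  rw [h1, Finset.sum_comm]
  simp [dotProduct, Matrix.mulVec, Finset.mul_sum, mul_assoc]

lemma Matrix.IsAlternating.conj {A : Matrix ι ι R} (hA : A.IsAlternating) (u : Matrix ι ι R) :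
    (u * A * uᵀ).IsAlternating := by
  refine ⟨?_, fun i => by rw [conj_apply_diag]; exact alt_quad hA _⟩
  rw [transpose_mul, transpose_mul, transpose_transpose, hA.1]
  simp [Matrix.mul_assoc]

end Quad

section Blocks
variable {κ : Type*} [Fintype κ] [DecidableEq κ] {F : Type*} [Field F]

/-- tail of the first row -/
def tailRow (A : Matrix (Unit ⊕ κ) (Unit ⊕ κ) F) : κ → F := fun k => A (Sum.inl ()) (Sum.inr k)

def Pb (g : Matrix κ κ F) : Matrix (Unit ⊕ κ) (Unit ⊕ κ) F := fromBlocks 1 0 0 g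

lemma Pb_mul (g h : Matrix κ κ F) : Pb g * Pb h = Pb (g * h) := by
  simp [Pb, fromBlocks_multiply]

lemma Pb_one : (Pb (1 : Matrix κ κ F)) = 1 := by simp [Pb, fromBlocks_one]

lemma Pb_transpose (g : Matrix κ κ F) : (Pb g)ᵀ = Pb gᵀ := by
  simp [Pb, fromBlocks_transpose]

lemma conj_eq_blocks (g : Matrix κ κ F) (A : Matrix (Unit ⊕ κ) (Unit ⊕ κ) F) :
    Pb g * A * (Pb g)ᵀ =
      fromBlocks A.toBlocks₁₁ (A.toBlocks₁₂ * gᵀ) (g * A.toBlocks₂₁) (g * A.toBlocks₂₂ * gᵀ) := by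
  conv_lhs => rw [← fromBlocks_toBlocks A]
  rw [Pb_transpose]
  simp [Pb, fromBlocks_multiply, Matrix.mul_assoc]

lemma tailRow_conj (g : Matrix κ κ F) (A : Matrix (Unit ⊕ κ) (Unit ⊕ κ) F) :
    tailRow (Pb g * A * (Pb g)ᵀ) = g.mulVec (tailRow A) := by
  funext k
  rw [tailRow, conj_eq_blocks]
  simp [fromBlocks, Matrix.mul_apply, Matrix.mulVec, dotProduct, toBlocks₁₂, tailRow, mul_comm]

lemma tailRow_ne_zero {A : Matrix (Unit ⊕ κ) (Unit ⊕ κ) F} (hA : A.IsAlternating)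
    (hd : IsUnit A.det) : tailRow A ≠ 0 := by
  intro h
  have hrow : ∀ j, A (Sum.inl ()) j = 0 := by
    rintro (y | k)
    · exact hA.2 _
    · exact congrFun h k
  have hz : A.det = 0 := Matrix.det_eq_zero_of_row_eq_zero (Sum.inl ()) hrow
  rw [hz] at hd
  exact not_isUnit_zero hd

lemma exists_conj_mat {a : κ → F} (ha : a ≠ 0) (k₀ : κ) :
    ∃ u v : Matrix κ κ F, u * v = 1 ∧ v * u = 1 ∧ u.mulVec a = Pi.single k₀ 1 := by
  have hli : LinearIndepOn F id ({a} : Set (κ → F)) :=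
    LinearIndepOn.singleton (v := id) ha
  let B := Module.Basis.extend hli
  have haM : a ∈ hli.extend (Set.subset_univ _) := hli.subset_extend _ rfl
  let i₁ : hli.extend (Set.subset_univ _) := ⟨a, haM⟩
  have hBa : B i₁ = a := Module.Basis.extend_apply_self hli i₁
  let g := B.indexEquiv (Pi.basisFun F κ)
  let e := g.trans (Equiv.swap (g i₁) k₀)
  let φ := B.equiv (Pi.basisFun F κ) e
  have hφa : φ a = Pi.single k₀ 1 := by
    rw [← hBa, Module.Basis.equiv_apply]
    simp [e, Equiv.swap_apply_left]
  refine ⟨LinearMap.toMatrix' (φ : (κ → F) →ₗ[F] (κ → F)),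
    LinearMap.toMatrix' (φ.symm : (κ → F) →ₗ[F] (κ → F)), ?_, ?_, ?_⟩
  · rw [← LinearMap.toMatrix'_comp]
    simp
  · rw [← LinearMap.toMatrix'_comp]
    simp
  · rw [← Matrix.toLin'_apply, Matrix.toLin'_toMatrix']
    exact hφa

end Blocks

section Conj
variable {κ : Type*} [Fintype κ] [DecidableEq κ] {F : Type*} [Field F]

lemma conj_conj (u v M : Matrix (Unit ⊕ κ) (Unit ⊕ κ) F) (h : v * u = 1) :
    v * (u * M * uᵀ) * vᵀ = M := by
  have h' : uᵀ * vᵀ = 1 := by rw [← transpose_mul, h, transpose_one]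
  have e : v * (u * M * uᵀ) * vᵀ = (v * u) * M * (uᵀ * vᵀ) := by
    simp only [Matrix.mul_assoc]
  rw [e, h, h', Matrix.one_mul, Matrix.mul_one]

/-- Conjugation by an invertible block matrix as an equivalence on invertible
alternating matrices. -/
def conjEquiv (u v : Matrix κ κ F) (huv : u * v = 1) (hvu : v * u = 1) :
    {A : Matrix (Unit ⊕ κ) (Unit ⊕ κ) F // A.IsAlternating ∧ IsUnit A.det} ≃
    {A : Matrix (Unit ⊕ κ) (Unit ⊕ κ) F // A.IsAlternating ∧ IsUnit A.det} where
  toFun A := ⟨Pb u * A.1 * (Pb u)ᵀ, A.2.1.conj _, by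
    have h1 : IsUnit (Pb u).det :=
      Matrix.isUnit_det_of_right_inverse (B := Pb v) (by rw [Pb_mul, huv, Pb_one])
    have h2 : IsUnit (Pb u)ᵀ.det := by rw [Matrix.det_transpose]; exact h1
    simpa [Matrix.det_mul] using (h1.mul A.2.2).mul h2⟩
  invFun A := ⟨Pb v * A.1 * (Pb v)ᵀ, A.2.1.conj _, by
    have h1 : IsUnit (Pb v).det :=
      Matrix.isUnit_det_of_right_inverse (B := Pb u) (by rw [Pb_mul, hvu, Pb_one])
    have h2 : IsUnit (Pb v)ᵀ.det := by rw [Matrix.det_transpose]; exact h1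
    simpa [Matrix.det_mul] using (h1.mul A.2.2).mul h2⟩
  left_inv A := Subtype.ext (conj_conj (Pb u) (Pb v) A.1 (by rw [Pb_mul, hvu, Pb_one]))
  right_inv A := Subtype.ext (conj_conj (Pb v) (Pb u) A.1 (by rw [Pb_mul, huv, Pb_one]))

/-- Any fiber of `tailRow` over a nonzero vector has the same cardinality as the fiber over
`Pi.single k₀ 1`. -/
lemma card_fiber_eq (k₀ : κ) {a : κ → F} (ha : a ≠ 0) :
    Nat.card {A : {A : Matrix (Unit ⊕ κ) (Unit ⊕ κ) F // A.IsAlternating ∧ IsUnit A.det} //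
        tailRow A.1 = a} =
    Nat.card {A : {A : Matrix (Unit ⊕ κ) (Unit ⊕ κ) F // A.IsAlternating ∧ IsUnit A.det} //
        tailRow A.1 = Pi.single k₀ 1} := by
  obtain ⟨u, v, huv, hvu, hu⟩ := exists_conj_mat ha k₀
  refine Nat.card_congr ((conjEquiv u v huv hvu).subtypeEquiv (fun A => ?_))
  show tailRow A.1 = a ↔ tailRow (Pb u * A.1 * (Pb u)ᵀ) = Pi.single k₀ 1
  rw [tailRow_conj]
  constructor
  · rintro rfl; exact hu
  · intro h
    have h2 : v.mulVec (u.mulVec (tailRow A.1)) = v.mulVec (u.mulVec a) := by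
      rw [h, hu]
    simpa [Matrix.mulVec_mulVec, hvu] using h2

lemma card_eq_mul_of_fibers {α β : Type*} [Finite α] [Finite β] (f : α → β) (N : ℕ)
    (h : ∀ b : β, Nat.card {a // f a = b} = N) : Nat.card α = Nat.card β * N := by
  classical
  letI : Fintype α := Fintype.ofFinite α
  letI : Fintype β := Fintype.ofFinite β
  letI : ∀ b : β, Fintype {a // f a = b} := fun b => Fintype.ofFinite _
  rw [← Nat.card_congr (Equiv.sigmaFiberEquiv f), Nat.card_eq_fintype_card,
    Fintype.card_sigma]
  simp_rw [← Nat.card_eq_fintype_card, h]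
  rw [Finset.sum_const, smul_eq_mul, Finset.card_univ, Nat.card_eq_fintype_card]

end Conj

section Recon
variable {μ : Type*} [Fintype μ] [DecidableEq μ] {F : Type*} [Field F]

/-- The first standard basis vector of `F^(Unit ⊕ μ)`. -/
def e0 : (Unit ⊕ μ) → F := Sum.elim (fun _ => 1) (fun _ => 0)

lemma e0_eq_single : (e0 : (Unit ⊕ μ) → F) = Pi.single (Sum.inl ()) 1 := by
  funext x
  rcases x with x | x
  · simp [e0]
  · simp [e0, Pi.single_apply]

/-- Reconstruct an alternating matrix from the data `(b, D)`, with first row `(0, 1, 0, …, 0)`. -/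
def recon (b : μ → F) (D : Matrix μ μ F) :
    Matrix (Unit ⊕ (Unit ⊕ μ)) (Unit ⊕ (Unit ⊕ μ)) F :=
  fromBlocks 0 (Matrix.of fun _ k => e0 k) (Matrix.of fun k _ => -(e0 k : F))
    (fromBlocks 0 (Matrix.of fun _ j => b j) (Matrix.of fun i _ => -(b i)) D)

lemma recon_alt {b : μ → F} {D : Matrix μ μ F} (hD : D.IsAlternating) :
    (recon b D).IsAlternating := by
  have hsk : ∀ i j, D j i = -D i j := fun i j => by
    conv_lhs => rw [← Matrix.transpose_apply D, hD.1]
    simp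
  constructor
  · ext i j
    rcases i with i | i | i <;> rcases j with j | j | j <;>
      simp [recon, fromBlocks, e0, transpose_apply, hD.2]
    exact hsk i j
  · rintro (i | i | i) <;> simp [recon, fromBlocks, e0, hD.2]

lemma tailRow_recon (b : μ → F) (D : Matrix μ μ F) : tailRow (recon b D) = e0 := by
  funext k
  rcases k with k | k <;> simp [tailRow, recon, fromBlocks, e0]

/-- Every invertible-alternating matrix with first row `(0,1,0,…,0)` is a `recon`. -/
lemma eq_recon {A : Matrix (Unit ⊕ (Unit ⊕ μ)) (Unit ⊕ (Unit ⊕ μ)) F}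
    (hA : A.IsAlternating) (ht : tailRow A = e0) :
    A = recon (fun i => A (Sum.inr (Sum.inl ())) (Sum.inr (Sum.inr i)))
      (Matrix.of fun i j => A (Sum.inr (Sum.inr i)) (Sum.inr (Sum.inr j))) := by
  have hsk : ∀ i j, A j i = -A i j := fun i j => by
    conv_lhs => rw [← Matrix.transpose_apply A, hA.1]
    simp
  have ht' : ∀ k, A (Sum.inl ()) (Sum.inr k) = e0 k := fun k => congrFun ht k
  ext i j
  rcases i with i | i | i <;> rcases j with j | j | j <;>
    simp [recon, fromBlocks, e0, hA.2] <;>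
    first
      | (rw [show A (Sum.inl ()) (Sum.inr (Sum.inl j)) = e0 (Sum.inl j) from ht' _]; simp [e0])
      | (rw [show A (Sum.inl ()) (Sum.inr (Sum.inr j)) = e0 (Sum.inr j) from ht' _]; simp [e0])
      | (rw [hsk, show A (Sum.inl ()) (Sum.inr (Sum.inl i)) = e0 (Sum.inl i) from ht' _]; simp [e0])
      | (rw [hsk, show A (Sum.inl ()) (Sum.inr (Sum.inr i)) = e0 (Sum.inr i) from ht' _]; simp [e0])
      | rw [hsk]

def Jmat : Matrix (Unit ⊕ Unit) (Unit ⊕ Unit) F := fromBlocks 0 1 (-1) 0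

def Jinv : Matrix (Unit ⊕ Unit) (Unit ⊕ Unit) F := fromBlocks 0 (-1) 1 0

lemma Jmat_mul_Jinv : (Jmat : Matrix _ _ F) * Jinv = 1 := by
  simp [Jmat, Jinv, fromBlocks_multiply, ← fromBlocks_one]

lemma Jinv_mul_Jmat : (Jinv : Matrix _ _ F) * Jmat = 1 := by
  simp [Jmat, Jinv, fromBlocks_multiply, ← fromBlocks_one]

def invertibleJmat : Invertible (Jmat : Matrix (Unit ⊕ Unit) (Unit ⊕ Unit) F) :=
  ⟨Jinv, Jinv_mul_Jmat, Jmat_mul_Jinv⟩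

def ebFin : (Unit ⊕ Unit) ≃ Fin 2 where
  toFun := Sum.elim (fun _ => 0) (fun _ => 1)
  invFun i := if i = 0 then Sum.inl () else Sum.inr ()
  left_inv := by rintro (⟨⟩ | ⟨⟩) <;> simp
  right_inv := by intro i; fin_cases i <;> simp

lemma det_Jmat : (Jmat : Matrix _ _ F).det = 1 := by
  have h : reindex ebFin ebFin (Jmat : Matrix _ _ F) = !![0, 1; -1, 0] := by
    ext i j
    fin_cases i <;> fin_cases j <;> simp [Jmat, ebFin, fromBlocks]
  have h2 := Matrix.det_reindex_self ebFin (Jmat : Matrix _ _ F)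
  rw [h] at h2
  rw [← h2, Matrix.det_fin_two_of]
  ring

def Emat (b : μ → F) : Matrix (Unit ⊕ Unit) μ F :=
  Matrix.of fun x j => Sum.elim (fun _ => (0 : F)) (fun _ => b j) x

def Lmat (b : μ → F) : Matrix μ (Unit ⊕ Unit) F :=
  Matrix.of fun i x => Sum.elim (fun _ => (0 : F)) (fun _ => -b i) x

def eassoc : (Unit ⊕ (Unit ⊕ μ)) ≃ ((Unit ⊕ Unit) ⊕ μ) := (Equiv.sumAssoc Unit Unit μ).symm

lemma recon_reindex (b : μ → F) (D : Matrix μ μ F) :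
    reindex (eassoc (μ := μ)) eassoc (recon b D) = fromBlocks Jmat (Emat b) (Lmat b) D := by
  ext i j
  rcases i with (i | i) | i <;> rcases j with (j | j) | j <;>
    simp [recon, fromBlocks, e0, eassoc, Equiv.sumAssoc, Jmat, Emat, Lmat]

lemma det_recon (b : μ → F) (D : Matrix μ μ F) : (recon b D).det = D.det := by
  letI := invertibleJmat (F := F)
  rw [← Matrix.det_reindex_self (eassoc (μ := μ)) (recon b D), recon_reindex,
    Matrix.det_fromBlocks₁₁]
  have hinv : (⅟ (Jmat : Matrix (Unit ⊕ Unit) (Unit ⊕ Unit) F)) = Jinv := rfl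
  have hL : Lmat b * ⅟ (Jmat : Matrix (Unit ⊕ Unit) (Unit ⊕ Unit) F) * Emat b = 0 := by
    rw [hinv]
    ext i j
    simp [Lmat, Jinv, Emat, Matrix.mul_apply, Fintype.sum_sum_type, fromBlocks]
  rw [hL, sub_zero, det_Jmat, one_mul]

end Recon

section FiberRecon
variable {μ : Type*} [Fintype μ] [DecidableEq μ] {F : Type*} [Field F]

def fiberReconEquiv :
    {A : {A : Matrix (Unit ⊕ (Unit ⊕ μ)) (Unit ⊕ (Unit ⊕ μ)) F //
        A.IsAlternating ∧ IsUnit A.det} // tailRow A.1 = e0} ≃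
    (μ → F) × {D : Matrix μ μ F // D.IsAlternating ∧ IsUnit D.det} where
  toFun A := ⟨fun i => A.1.1 (Sum.inr (Sum.inl ())) (Sum.inr (Sum.inr i)),
    ⟨Matrix.of fun i j => A.1.1 (Sum.inr (Sum.inr i)) (Sum.inr (Sum.inr j)),
      by
        have hsk : ∀ i j, A.1.1 j i = -A.1.1 i j := fun i j => by
          conv_lhs => rw [← Matrix.transpose_apply A.1.1, A.1.2.1.1]
          simp
        exact ⟨by ext i j; exact hsk _ _, fun i => A.1.2.1.2 _⟩,
      by
        have he := eq_recon A.1.2.1 A.2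
        have hd := A.1.2.2
        rw [he, det_recon] at hd
        exact hd⟩⟩
  invFun x := ⟨⟨recon x.1 x.2.1, recon_alt x.2.2.1,
      by rw [det_recon]; exact x.2.2.2⟩, tailRow_recon _ _⟩
  left_inv A := Subtype.ext (Subtype.ext (eq_recon A.1.2.1 A.2).symm)
  right_inv x := by
    refine Prod.ext rfl (Subtype.ext ?_)
    rfl

end FiberRecon

section Count
variable {F : Type*} [Field F] [Finite F]

lemma main_count {μ : Type*} [Fintype μ] [DecidableEq μ] :
    Nat.card {A : Matrix (Unit ⊕ (Unit ⊕ μ)) (Unit ⊕ (Unit ⊕ μ)) F //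
        A.IsAlternating ∧ IsUnit A.det} =
    Nat.card {a : (Unit ⊕ μ) → F // a ≠ 0} * (Nat.card (μ → F) *
      Nat.card {D : Matrix μ μ F // D.IsAlternating ∧ IsUnit D.det}) := by
  refine (card_eq_mul_of_fibers
    (fun A : {A : Matrix (Unit ⊕ (Unit ⊕ μ)) (Unit ⊕ (Unit ⊕ μ)) F //
        A.IsAlternating ∧ IsUnit A.det} =>
      (⟨tailRow A.1, tailRow_ne_zero A.2.1 A.2.2⟩ : {a : (Unit ⊕ μ) → F // a ≠ 0}))
    (Nat.card {A : {A : Matrix (Unit ⊕ (Unit ⊕ μ)) (Unit ⊕ (Unit ⊕ μ)) F //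
        A.IsAlternating ∧ IsUnit A.det} // tailRow A.1 = Pi.single (Sum.inl ()) 1})
    (fun b => ?_)).trans ?_
  · rw [Nat.card_congr (Equiv.subtypeEquivRight (fun A => Subtype.ext_iff))]
    exact card_fiber_eq (Sum.inl ()) b.2
  · congr 1
    rw [← e0_eq_single, Nat.card_congr (fiberReconEquiv (μ := μ) (F := F)), Nat.card_prod]

lemma Matrix.IsAlternating.reindex_self {ι ι' : Type*} [Fintype ι] [DecidableEq ι] [Fintype ι']
    [DecidableEq ι'] {A : Matrix ι ι F} (hA : A.IsAlternating) (e : ι ≃ ι') :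
    (reindex e e A).IsAlternating := by
  have hsk : ∀ i j, A j i = -A i j := fun i j => by
    conv_lhs => rw [← Matrix.transpose_apply A, hA.1]
    simp
  constructor
  · ext i j
    simp only [reindex_apply, submatrix_apply, transpose_apply, Matrix.neg_apply]
    exact hsk _ _
  · intro i
    simp [reindex_apply, hA.2]

lemma card_T_reindex {ι ι' : Type*} [Fintype ι] [DecidableEq ι] [Fintype ι'] [DecidableEq ι']
    (e : ι ≃ ι') :
    Nat.card {A : Matrix ι ι F // A.IsAlternating ∧ IsUnit A.det} =
    Nat.card {A : Matrix ι' ι' F // A.IsAlternating ∧ IsUnit A.det} := by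
  refine Nat.card_congr (Equiv.subtypeEquiv (Matrix.reindex e e : Matrix ι ι F ≃ Matrix ι' ι' F) (fun A => ?_))
  have h1 : (Matrix.reindex e e : Matrix ι ι F ≃ Matrix ι' ι' F) A = reindex e e A := rfl
  constructor
  · rintro ⟨h2, h3⟩
    refine ⟨by rw [h1]; exact h2.reindex_self e, ?_⟩
    rw [h1, Matrix.det_reindex_self]; exact h3
  · rintro ⟨h2, h3⟩
    rw [h1] at h2 h3
    have h4 := h2.reindex_self e.symm
    rw [Matrix.det_reindex_self] at h3
    refine ⟨?_, h3⟩
    simpa [Matrix.reindex_apply, Matrix.submatrix_submatrix] using h4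

end Count

/-- The number of invertible alternating `m×m` matrices over `𝔽_p` (for `m` even, `m ≥ 2`)
satisfies `#GL_m(F_p)_alt = (p^{m-1} - 1) · p^{m-2} · #GL_{m-2}(F_p)_alt`,
with `#GL_0(F_p)_alt = 1`. -/
theorem stmt1 (p m : ℕ) (hp : p.Prime) (hm : Even m) (h2 : 2 ≤ m) :
    Nat.card {A : Matrix (Fin m) (Fin m) (ZMod p) // A.IsAlternating ∧ IsUnit A.det} =
      (p ^ (m - 1) - 1) * p ^ (m - 2) *
        Nat.card {A : Matrix (Fin (m - 2)) (Fin (m - 2)) (ZMod p) //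
          A.IsAlternating ∧ IsUnit A.det} ∧
    Nat.card {A : Matrix (Fin 0) (Fin 0) (ZMod p) // A.IsAlternating ∧ IsUnit A.det} = 1 := by
  haveI : Fact p.Prime := ⟨hp⟩
  have h0 : Nat.card {A : Matrix (Fin 0) (Fin 0) (ZMod p) // A.IsAlternating ∧ IsUnit A.det}
      = 1 := by
    haveI : Unique {A : Matrix (Fin 0) (Fin 0) (ZMod p) // A.IsAlternating ∧ IsUnit A.det} :=
      { default := ⟨0, ⟨by simp, fun i => rfl⟩, by rw [Matrix.det_fin_zero]; exact isUnit_one⟩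
        uniq := fun A => Subtype.ext (by ext i j; exact i.elim0) }
    exact Nat.card_unique
  refine ⟨?_, h0⟩
  obtain ⟨n, rfl⟩ : ∃ n, m = n + 2 := ⟨m - 2, by omega⟩
  have hn2 : n + 2 - 2 = n := by omega
  have hn1 : n + 2 - 1 = n + 1 := by omega
  rw [hn2, hn1]
  have e : Fin (n + 2) ≃ (Unit ⊕ (Unit ⊕ Fin n)) :=
    Fintype.equivOfCardEq (by simp; omega)
  rw [card_T_reindex (F := ZMod p) e, main_count]
  have c1 : Nat.card {a : (Unit ⊕ Fin n) → ZMod p // a ≠ 0} = p ^ (n + 1) - 1 := by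
    rw [Nat.card_eq_fintype_card,
      Fintype.card_congr (Equiv.subtypeEquivRight
        (fun a : (Unit ⊕ Fin n) → ZMod p => Iff.rfl :
          ∀ a : (Unit ⊕ Fin n) → ZMod p, a ≠ 0 ↔ ¬(a = 0))),
      Fintype.card_subtype_compl, Fintype.card_subtype_eq]
    simp [ZMod.card]
    rw [Nat.add_comm]
  have c2 : Nat.card (Fin n → ZMod p) = p ^ n := by
    rw [Nat.card_eq_fintype_card]
    simp [ZMod.card]
  rw [c1, c2, ← mul_assoc]
end

section
/- Let D be an n×n matrix over Z_p with det D ≠ 0. Then the set of matrices A ∈ M_n(Z_p) with det A ≠ 0 and A^{-1} - D^{-1} ∈ M_n(Z_p) equals the set of matrices A ∈ D + D·M_n(Z_p)·D such that the reductions mod p of A and D have equal rank. -/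
/-- Over a field, if `rank ((1 + d*m) * d) = rank d` then `1 + m*d` is nonsingular. -/
lemma stmt4_aux_field {K : Type*} [Field K] {n : ℕ} (d m : Matrix (Fin n) (Fin n) K)
    (h : ((1 + d * m) * d).rank = d.rank) : (1 + m * d).det ≠ 0 := by
  intro h0
  obtain ⟨v, hv0, hv⟩ := Matrix.exists_mulVec_eq_zero_iff.mpr h0
  have hmdv : m.mulVec (d.mulVec v) = -v := by
    rw [Matrix.add_mulVec, Matrix.one_mulVec, ← Matrix.mulVec_mulVec] at hv
    exact eq_neg_of_add_eq_zero_right hv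
  have hdv : d.mulVec v ≠ 0 := by
    intro hz
    apply hv0
    have h' := hmdv
    rw [hz, Matrix.mulVec_zero] at h'
    exact neg_eq_zero.mp h'.symm
  -- kernel of d is strictly contained in kernel of (1 + d*m) * d
  have hle : LinearMap.ker d.mulVecLin ≤ LinearMap.ker ((1 + d * m) * d).mulVecLin := by
    intro x hx
    rw [LinearMap.mem_ker] at hx ⊢
    rw [Matrix.mulVecLin_apply] at hx ⊢
    rw [← Matrix.mulVec_mulVec, hx, Matrix.mulVec_zero]
  have hvmem : v ∈ LinearMap.ker ((1 + d * m) * d).mulVecLin := by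
    rw [LinearMap.mem_ker, Matrix.mulVecLin_apply, ← Matrix.mulVec_mulVec,
      Matrix.add_mulVec, Matrix.one_mulVec, ← Matrix.mulVec_mulVec, hmdv,
      Matrix.mulVec_neg]
    simp
  have hvnmem : v ∉ LinearMap.ker d.mulVecLin := by
    rw [LinearMap.mem_ker, Matrix.mulVecLin_apply]
    exact hdv
  have hlt : LinearMap.ker d.mulVecLin < LinearMap.ker ((1 + d * m) * d).mulVecLin :=
    lt_of_le_of_ne hle (fun he => hvnmem (he ▸ hvmem))
  have hfr : Module.finrank K (LinearMap.ker d.mulVecLin) <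
      Module.finrank K (LinearMap.ker ((1 + d * m) * d).mulVecLin) :=
    Submodule.finrank_lt_finrank_of_lt hlt
  have h1 := LinearMap.finrank_range_add_finrank_ker ((1 + d * m) * d).mulVecLin
  have h2 := LinearMap.finrank_range_add_finrank_ker d.mulVecLin
  rw [Matrix.rank, Matrix.rank] at h
  omega

/-- Let `D` be an `n×n` matrix over `ℤ_p` with `det D ≠ 0`.  The set of `A ∈ M_n(ℤ_p)` with
`det A ≠ 0` and `A⁻¹ - D⁻¹ ∈ M_n(ℤ_p)` (inverses taken over `ℚ_p`) equals the set of
`A ∈ D + D·M_n(ℤ_p)·D` whose reduction mod `p` has the same rank as that of `D`. -/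
theorem stmt4 (p : ℕ) [Fact p.Prime] (n : ℕ) (D : Matrix (Fin n) (Fin n) ℤ_[p])
    (hD : D.det ≠ 0) :
    {A : Matrix (Fin n) (Fin n) ℤ_[p] | A.det ≠ 0 ∧
        ∃ B : Matrix (Fin n) (Fin n) ℤ_[p],
          (A.map ((↑) : ℤ_[p] → ℚ_[p]))⁻¹ - (D.map ((↑) : ℤ_[p] → ℚ_[p]))⁻¹ =
            B.map ((↑) : ℤ_[p] → ℚ_[p])} =
      {A : Matrix (Fin n) (Fin n) ℤ_[p] |
        (∃ N : Matrix (Fin n) (Fin n) ℤ_[p], A = D + D * N * D) ∧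
          (A.map (PadicInt.toZMod (p := p))).rank = (D.map (PadicInt.toZMod (p := p))).rank} := by
  -- ring homs
  set φ : Matrix (Fin n) (Fin n) ℤ_[p] →+* Matrix (Fin n) (Fin n) ℚ_[p] :=
    (PadicInt.Coe.ringHom (p := p)).mapMatrix with hφdef
  set ψ : Matrix (Fin n) (Fin n) ℤ_[p] →+* Matrix (Fin n) (Fin n) (ZMod p) :=
    (PadicInt.toZMod (p := p)).mapMatrix with hψdef
  have hφmap : ∀ X : Matrix (Fin n) (Fin n) ℤ_[p], X.map ((↑) : ℤ_[p] → ℚ_[p]) = φ X :=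
    fun X => rfl
  have hψmap : ∀ X : Matrix (Fin n) (Fin n) ℤ_[p], X.map (PadicInt.toZMod (p := p)) = ψ X :=
    fun X => rfl
  have hφinj : Function.Injective φ := by
    intro X Y h
    ext i j
    have h2 : (φ X) i j = (φ Y) i j := by rw [h]
    exact Subtype.coe_injective h2
  have hdetφ : ∀ X : Matrix (Fin n) (Fin n) ℤ_[p], (φ X).det = ((X.det : ℤ_[p]) : ℚ_[p]) :=
    fun X => ((PadicInt.Coe.ringHom (p := p)).map_det X).symm
  have hdetψ : ∀ X : Matrix (Fin n) (Fin n) ℤ_[p],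
      (ψ X).det = PadicInt.toZMod X.det :=
    fun X => ((PadicInt.toZMod (p := p)).map_det X).symm
  have hDdet' : (φ D).det ≠ 0 := by
    rw [hdetφ]
    exact PadicInt.coe_ne_zero.mpr hD
  have hDu : IsUnit (φ D).det := isUnit_iff_ne_zero.mpr hDdet'
  ext A
  simp only [Set.mem_setOf_eq]
  constructor
  · rintro ⟨hA, B, hB⟩
    have hAdet' : (φ A).det ≠ 0 := by
      rw [hdetφ]
      exact PadicInt.coe_ne_zero.mpr hA
    have hAu : IsUnit (φ A).det := isUnit_iff_ne_zero.mpr hAdet'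
    rw [hφmap A, hφmap D, hφmap B] at hB
    -- e1 : A' * B' * D' = D' - A'
    have e1 : φ A * φ B * φ D = φ D - φ A := by
      rw [← hB, Matrix.mul_sub, Matrix.mul_nonsing_inv _ hAu, Matrix.sub_mul, one_mul,
        Matrix.mul_assoc, Matrix.nonsing_inv_mul _ hDu, mul_one]
    have e2 : φ D * φ B * φ A = φ D - φ A := by
      rw [← hB, Matrix.mul_sub, Matrix.mul_nonsing_inv _ hDu, Matrix.sub_mul, one_mul,
        Matrix.mul_assoc, Matrix.nonsing_inv_mul _ hAu, mul_one]
    -- A = D + D * N * D with N = -B + B*A*B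
    have hADN : A = D + D * (-B + B * A * B) * D := by
      apply hφinj
      rw [map_add, map_mul, map_mul, map_add, map_neg, map_mul, map_mul]
      have : φ D * (-φ B + φ B * φ A * φ B) * φ D
          = -(φ D * φ B * φ D) + (φ D * φ B) * (φ A * φ B * φ D) := by noncomm_ring
      rw [this, e1]
      rw [show φ D + (-(φ D * φ B * φ D) + φ D * φ B * (φ D - φ A))
          = φ D - φ D * φ B * φ A by noncomm_ring, e2]
      noncomm_ring
    -- D = A + A * M * A with M = B + B*D*B
    have hDAM : D = A + A * (B + B * D * B) * A := by
      apply hφinj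
      rw [map_add, map_mul, map_mul, map_add, map_mul, map_mul]
      have : φ A * (φ B + φ B * φ D * φ B) * φ A
          = φ A * φ B * φ A + (φ A * φ B) * (φ D * φ B * φ A) := by noncomm_ring
      rw [this, e2]
      rw [show φ A + (φ A * φ B * φ A + φ A * φ B * (φ D - φ A))
          = φ A + φ A * φ B * φ D by noncomm_ring, e1]
      noncomm_ring
    refine ⟨⟨-B + B * A * B, hADN⟩, ?_⟩
    rw [hψmap A, hψmap D]
    apply le_antisymm
    · have : ψ A = ψ D * (1 + ψ (-B + B * A * B) * ψ D) := by
        conv_lhs => rw [hADN]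
        rw [map_add, map_mul, map_mul]
        noncomm_ring
      rw [this]
      exact Matrix.rank_mul_le_left _ _
    · have : ψ D = ψ A * (1 + ψ (B + B * D * B) * ψ A) := by
        conv_lhs => rw [hDAM]
        rw [map_add, map_mul, map_mul]
        noncomm_ring
      rw [this]
      exact Matrix.rank_mul_le_left _ _
  · rintro ⟨⟨N, hADN⟩, hrank⟩
    rw [hψmap A, hψmap D] at hrank
    -- det (1 + N * D) is a unit in ℤ_[p]
    have hrank' : ((1 + ψ D * ψ N) * ψ D).rank = (ψ D).rank := by
      rw [← hrank]
      congr 1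
      conv_lhs => rw [show (1 + ψ D * ψ N) * ψ D = ψ D + ψ D * ψ N * ψ D by noncomm_ring]
      rw [hADN, map_add, map_mul, map_mul]
    have hdet0 : (1 + ψ N * ψ D).det ≠ 0 := stmt4_aux_field (ψ D) (ψ N) hrank'
    have hu : IsUnit ((1 + N * D).det) := by
      rw [← IsLocalRing.notMem_maximalIdeal, ← PadicInt.ker_toZMod, RingHom.mem_ker]
      intro hz
      apply hdet0
      rw [← hdetψ, map_add, map_one, map_mul] at hz
      exact hz
    -- A = D * (1 + N * D)
    have hAfac : A = D * (1 + N * D) := by rw [hADN]; noncomm_ring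
    have hAdet : A.det ≠ 0 := by
      rw [hAfac, Matrix.det_mul]
      exact mul_ne_zero hD hu.ne_zero
    refine ⟨hAdet, ?_⟩
    -- C := inverse of (1 + N * D) over ℤ_[p]
    set C : Matrix (Fin n) (Fin n) ℤ_[p] := (1 + N * D)⁻¹ with hCdef
    have hC2 : C * (1 + N * D) = 1 := Matrix.nonsing_inv_mul _ hu
    refine ⟨-(C * N), ?_⟩
    rw [hφmap A, hφmap D, hφmap (-(C * N))]
    have hC2' : φ C * (1 + φ N * φ D) = 1 := by
      have := congrArg φ hC2
      rw [map_mul, map_add, map_one, map_mul] at this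
      rw [this]
    have hsub : φ C * (φ N * φ D) = 1 - φ C := by
      rw [mul_add, mul_one] at hC2'
      linear_combination (norm := noncomm_ring) hC2'
    have hAfac' : φ A = φ D * (1 + φ N * φ D) := by
      rw [hAfac, map_mul, map_add, map_one, map_mul]
    have hleft : (φ D)⁻¹ * φ D = 1 := Matrix.nonsing_inv_mul _ hDu
    have hinv : (φ A)⁻¹ = (φ D)⁻¹ + -(φ C * φ N) := by
      apply Matrix.inv_eq_left_inv
      calc ((φ D)⁻¹ + -(φ C * φ N)) * φ A
          = ((φ D)⁻¹ * φ D) * (1 + φ N * φ D)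
            - (φ C * (φ N * φ D)) * (1 + φ N * φ D) := by
            rw [hAfac']; noncomm_ring
        _ = (1 + φ N * φ D) - (1 - φ C) * (1 + φ N * φ D) := by rw [hleft, hsub, one_mul]
        _ = φ C * (1 + φ N * φ D) := by noncomm_ring
        _ = 1 := hC2'
    rw [hinv, map_neg, map_mul]
    noncomm_ring
end

section
/- Let R be a principal ideal domain with fraction field K, let L be a free R-module of finite rank n, and let A : L → L^T := Hom_R(L, R) be induced by an alternating R-bilinear pairing on L with det A ≠ 0 (i.e., A ⊗ K is an isomorphism). Then the pairing ⟨x, y⟩_A on coker A × coker A with values in K/R, induced by (x, y) ↦ x^t A^{-1} y on L^T × L^T, is well-defined, alternating, and nondegenerate (its left and right kernels are zero). -/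
open scoped Matrix

/-- The value `xᵗ A⁻¹ y mod R` in `K/R`, where `K = Frac R`. -/
noncomputable def pairingVal {R : Type*} [CommRing R] [IsDomain R] {n : ℕ}
    (A : Matrix (Fin n) (Fin n) R) (x y : Fin n → R) :
    FractionRing R ⧸ LinearMap.range (Algebra.linearMap R (FractionRing R)) :=
  Submodule.Quotient.mk
    ((fun i => algebraMap R (FractionRing R) (x i)) ⬝ᵥ
      ((A.map (algebraMap R (FractionRing R)))⁻¹ *ᵥ fun i => algebraMap R (FractionRing R) (y i)))

/-- For an alternating `A` over a PID `R` with `det A ≠ 0`, the induced pairing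
`⟨x,y⟩_A = xᵗ A⁻¹ y mod R` on `coker A × coker A` with values in `K/R` is well-defined
(descends modulo the image of `A` in each variable), alternating, and nondegenerate. -/
theorem stmt6 (R : Type*) [CommRing R] [IsDomain R] [IsPrincipalIdealRing R] (n : ℕ)
    (A : Matrix (Fin n) (Fin n) R) (hAlt : A.IsAlternating) (hdet : A.det ≠ 0) :
    (∀ x y z : Fin n → R, pairingVal A (x + A *ᵥ z) y = pairingVal A x y) ∧
    (∀ x y z : Fin n → R, pairingVal A x (y + A *ᵥ z) = pairingVal A x y) ∧
    (∀ x : Fin n → R, pairingVal A x x = 0) ∧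
    (∀ y : Fin n → R, (∀ x, pairingVal A x y = 0) → ∃ z, y = A *ᵥ z) ∧
    (∀ x : Fin n → R, (∀ y, pairingVal A x y = 0) → ∃ z, x = A *ᵥ z) := by
  classical
  set K := FractionRing R
  set φ := algebraMap R K with hφdef
  have hφ : Function.Injective φ := IsFractionRing.injective R K
  set B := A.map φ with hBdef
  set p := LinearMap.range (Algebra.linearMap R K) with hpdef
  have hmem : ∀ r : R, φ r ∈ p := fun r => ⟨r, rfl⟩
  -- determinant of B is a unit
  have hBdet : IsUnit B.det := by
    have h2 : B.det = φ A.det := (RingHom.map_det φ A).symm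
    rw [h2]
    refine isUnit_iff_ne_zero.2 fun h => hdet ?_
    exact hφ (by simpa using h)
  -- B is alternating
  have hBT : Bᵀ = -B := by
    rw [hBdef, ← Matrix.transpose_map, hAlt.1]
    ext i j
    simp [Matrix.map_apply]
  have hBd : ∀ i, B i i = 0 := fun i => by simp [hBdef, Matrix.map_apply, hAlt.2 i]
  have hBinv : B * B⁻¹ = 1 := Matrix.mul_nonsing_inv B hBdet
  have hinvB : B⁻¹ * B = 1 := Matrix.nonsing_inv_mul B hBdet
  -- mapping mulVec
  have hmap : ∀ z : Fin n → R, (fun i => φ ((A *ᵥ z) i)) = B *ᵥ fun i => φ (z i) :=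
    fun z => funext fun i => by
      simpa [Function.comp_def] using RingHom.map_mulVec φ A z i
  -- quadratic form of B vanishes
  have hquad : ∀ v : Fin n → K, v ⬝ᵥ (B *ᵥ v) = 0 := by
    intro v
    have hskew : ∀ i j, B j i = -B i j := fun i j => by
      have := congrFun (congrFun hBT i) j
      simpa [Matrix.transpose_apply] using this
    have hexp : v ⬝ᵥ (B *ᵥ v) =
        ∑ q ∈ Finset.univ ×ˢ Finset.univ, v q.1 * (B q.1 q.2 * v q.2) := by
      rw [Finset.sum_product]
      simp [dotProduct, Matrix.mulVec, Finset.mul_sum]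
    rw [hexp]
    refine Finset.sum_involution (fun q _ => (q.2, q.1)) ?_ ?_ ?_ ?_
    · intro q _
      rw [hskew q.1 q.2]
      ring
    · intro q _ hq
      intro hcontra
      apply hq
      have h12 : q.2 = q.1 := congrArg Prod.fst hcontra
      rw [h12, hBd]
      ring
    · intro q _; exact Finset.mem_product.2 ⟨Finset.mem_univ _, Finset.mem_univ _⟩
    · intro q _; rfl
  have hpair : ∀ x y : Fin n → R, pairingVal A x y = Submodule.Quotient.mk
      ((fun i => φ (x i)) ⬝ᵥ (B⁻¹ *ᵥ fun i => φ (y i))) := fun x y => rfl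
  refine ⟨?_, ?_, ?_, ?_, ?_⟩
  · -- well-defined in first variable
    intro x y z
    show Submodule.Quotient.mk _ = Submodule.Quotient.mk _
    rw [Submodule.Quotient.eq]
    have hx : (fun i => φ ((x + A *ᵥ z) i)) = (fun i => φ (x i)) + (B *ᵥ fun i => φ (z i)) := by
      funext i
      simp only [Pi.add_apply, map_add]
      rw [congrFun (hmap z) i]
    rw [hx, add_dotProduct]
    have hkey : (B *ᵥ fun i => φ (z i)) ⬝ᵥ (B⁻¹ *ᵥ fun i => φ (y i)) =
        φ (-(y ⬝ᵥ z)) := by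
      rw [dotProduct_comm, Matrix.dotProduct_mulVec, ← Matrix.mulVec_transpose, hBT,
        Matrix.neg_mulVec, Matrix.mulVec_mulVec, hBinv, Matrix.one_mulVec]
      rw [neg_dotProduct, map_neg, RingHom.map_dotProduct]
      rfl
    rw [hkey]
    convert hmem (-(y ⬝ᵥ z)) using 1
    exact add_sub_cancel_left _ _
  · -- well-defined in second variable
    intro x y z
    show Submodule.Quotient.mk _ = Submodule.Quotient.mk _
    rw [Submodule.Quotient.eq]
    have hy : (fun i => φ ((y + A *ᵥ z) i)) = (fun i => φ (y i)) + (B *ᵥ fun i => φ (z i)) := by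
      funext i
      simp only [Pi.add_apply, map_add]
      rw [congrFun (hmap z) i]
    rw [hy, Matrix.mulVec_add, Matrix.mulVec_mulVec, hinvB, Matrix.one_mulVec,
      dotProduct_add]
    have hkey : (fun i => φ (x i)) ⬝ᵥ (fun i => φ (z i)) = φ (x ⬝ᵥ z) :=
      (RingHom.map_dotProduct φ x z).symm
    rw [hkey]
    convert hmem (x ⬝ᵥ z) using 1
    exact add_sub_cancel_left _ _
  · -- alternating
    intro x
    show Submodule.Quotient.mk _ = 0
    rw [Submodule.Quotient.mk_eq_zero]
    set v : Fin n → K := fun i => φ (x i) with hv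
    set w := B⁻¹ *ᵥ v with hw
    have hvw : v = B *ᵥ w := by
      rw [hw, Matrix.mulVec_mulVec, hBinv, Matrix.one_mulVec]
    have h0 : v ⬝ᵥ w = 0 := by
      rw [hvw, dotProduct_comm]
      exact hquad w
    rw [h0]
    exact zero_mem _
  · -- nondegenerate in second variable
    intro y hy
    have hcomp : ∀ i, ∃ r : R, φ r = (B⁻¹ *ᵥ fun j => φ (y j)) i := by
      intro i
      have h := hy (Pi.single i 1)
      rw [hpair, Submodule.Quotient.mk_eq_zero] at h
      have hsingle : (fun j => φ ((Pi.single i 1 : Fin n → R) j)) = Pi.single i (1 : K) := by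
        funext j
        by_cases hji : j = i
        · subst hji; simp
        · simp [Pi.single_apply, hji]
      rw [hsingle, single_dotProduct, one_mul] at h
      exact h
    choose z hz using hcomp
    refine ⟨z, ?_⟩
    have hz' : (fun i => φ (z i)) = B⁻¹ *ᵥ fun j => φ (y j) := funext hz
    have : (fun i => φ ((A *ᵥ z) i)) = fun i => φ (y i) := by
      rw [hmap z, hz', Matrix.mulVec_mulVec, hBinv, Matrix.one_mulVec]
    funext i
    exact (hφ (congrFun this i)).symm
  · -- nondegenerate in first variable
    intro x hx
    have hcomp : ∀ i, ∃ r : R, φ r = (B⁻¹ *ᵥ fun j => φ (x j)) i := by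
      intro i
      have h := hx (Pi.single i 1)
      rw [hpair, Submodule.Quotient.mk_eq_zero] at h
      have hsingle : (fun j => φ ((Pi.single i 1 : Fin n → R) j)) = Pi.single i (1 : K) := by
        funext j
        by_cases hji : j = i
        · subst hji; simp
        · simp [Pi.single_apply, hji]
      rw [hsingle] at h
      have hinvT : B⁻¹ᵀ = -B⁻¹ := by
        rw [Matrix.transpose_nonsing_inv, hBT]
        refine Matrix.inv_eq_right_inv ?_
        rw [Matrix.neg_mul, Matrix.mul_neg, neg_neg, hBinv]
      have hval : (fun j => φ (x j)) ⬝ᵥ (B⁻¹ *ᵥ Pi.single i (1 : K)) =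
          -((B⁻¹ *ᵥ fun j => φ (x j)) i) := by
        rw [Matrix.dotProduct_mulVec, ← Matrix.mulVec_transpose, hinvT, Matrix.neg_mulVec,
          neg_dotProduct, dotProduct_single, mul_one]
      rw [hval] at h
      obtain ⟨r, hr⟩ := h
      exact ⟨-r, by simpa using congrArg Neg.neg hr⟩
    choose z hz using hcomp
    refine ⟨z, ?_⟩
    have hz' : (fun i => φ (z i)) = B⁻¹ *ᵥ fun j => φ (x j) := funext hz
    have : (fun i => φ ((A *ᵥ z) i)) = fun i => φ (x i) := by
      rw [hmap z, hz', Matrix.mulVec_mulVec, hBinv, Matrix.one_mulVec]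
    funext i
    exact (hφ (congrFun this i)).symm
end

section
/- Let n ∈ Z_{>0}, and let δ : A → B be a homomorphism of Z/nZ-modules such that for every divisor m of n the induced map A/mA → B/mB is injective. Then δ(A) is a direct summand of B. -/
private def zmodModuleOfTorsion (p : ℕ) (G : Type*) [AddCommGroup G]
    (h : ∀ v : G, p • v = 0) : Module (ZMod p) G := AddCommGroup.zmodModule h

private def smulH (m : ℕ) (B : Type*) [AddCommGroup B] : B →+ B :=
  AddMonoidHom.mk' (fun b => m • b) (fun a b => smul_add m a b)

@[simp] private lemma smulH_apply {m : ℕ} {B : Type*} [AddCommGroup B] (b : B) :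
    smulH m B b = m • b := rfl

private lemma bezout_helper {B : Type*} [AddCommGroup B] {n : ℕ}
    (hB : ∀ b : B, n • b = 0) (m : ℕ) (x y : B) (h : x = Nat.gcd m n • y) :
    ∃ a : ℤ, x = m • (a • y) := by
  refine ⟨Nat.gcdA m n, ?_⟩
  have hg : ((Nat.gcd m n : ℕ) : ℤ) = m * Nat.gcdA m n + n * Nat.gcdB m n := Nat.gcd_eq_gcd_ab m n
  have key : ((Nat.gcd m n : ℕ) : ℤ) • y = x := by rw [natCast_zsmul, ← h]
  rw [hg, add_zsmul, mul_zsmul, mul_zsmul] at key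
  have hn : (n : ℤ) • (Nat.gcdB m n • y) = 0 := by
    rw [smul_comm, natCast_zsmul, hB, smul_zero]
  rw [hn, add_zero, natCast_zsmul] at key
  exact key.symm

/-- A "pure" subgroup of an `n`-torsion abelian group is a direct summand. -/
private theorem key_lemma : ∀ (n : ℕ), 0 < n → ∀ (B : Type u) [AddCommGroup B],
    (∀ b : B, n • b = 0) → ∀ (N : AddSubgroup B),
    (∀ (m : ℕ) (x : B), x ∈ N → (∃ b : B, x = m • b) → ∃ y ∈ N, x = m • y) →
    ∃ C : AddSubgroup B, N ⊓ C = ⊥ ∧ N ⊔ C = ⊤ := by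
  intro n
  induction n using Nat.strong_induction_on with
  | _ n ih =>
  intro hn B _ hB N hpure
  by_cases hone : n = 1
  · have hall : ∀ b : B, b = 0 := by
      intro b; have := hB b; rwa [hone, one_smul] at this
    have hNtop : N = ⊤ := by
      ext x; simp only [AddSubgroup.mem_top, iff_true]
      have := hall x; rw [this]; exact N.zero_mem
    exact ⟨⊥, by simp, by simp [hNtop]⟩
  · have hp : (Nat.minFac n).Prime := Nat.minFac_prime hone
    set p := Nat.minFac n with hpdef
    set q := n / p with hqdef
    have hpq : p * q = n := Nat.mul_div_cancel' (Nat.minFac_dvd n)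
    have hq : 0 < q := Nat.div_pos (Nat.minFac_le hn) (Nat.minFac_pos n)
    have hqlt : q < n := Nat.div_lt_self hn hp.one_lt
    set P : AddSubgroup B := (smulH p B).range with hPdef
    set pN : AddSubgroup B := N.map (smulH p B) with hpNdef
    -- P is q-torsion
    have hPq : ∀ x : P, q • x = 0 := by
      intro x
      obtain ⟨b, hb⟩ := x.2
      apply Subtype.ext
      show q • (x : B) = 0
      rw [← hb]
      show q • (p • b) = 0
      rw [smul_smul, mul_comm, hpq, hB]
    set N₁ : AddSubgroup P := pN.addSubgroupOf P with hN₁def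
    -- purity of N₁ in P
    have hN₁pure : ∀ (m : ℕ) (x : P), x ∈ N₁ → (∃ b : P, x = m • b) → ∃ y ∈ N₁, x = m • y := by
      rintro m x hx ⟨b, hb⟩
      rw [AddSubgroup.mem_addSubgroupOf] at hx
      obtain ⟨y0, hy0, hxy0⟩ := AddSubgroup.mem_map.mp hx
      obtain ⟨b0, hb0⟩ := b.2
      have hxB : (x : B) = (m * p) • b0 := by
        have h1 : (x : B) = m • (b : B) := congrArg Subtype.val hb
        rw [h1, ← hb0]
        show m • (p • b0) = (m * p) • b0
        rw [smul_smul]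
      have hxN : (x : B) ∈ N := by
        rw [← hxy0]; exact N.nsmul_mem hy0 p
      obtain ⟨y1, hy1, hxy1⟩ := hpure (m * p) (x : B) hxN ⟨b0, hxB⟩
      refine ⟨⟨p • y1, ⟨y1, rfl⟩⟩, ?_, ?_⟩
      · rw [AddSubgroup.mem_addSubgroupOf]
        exact AddSubgroup.mem_map.mpr ⟨y1, hy1, rfl⟩
      · apply Subtype.ext
        show (x : B) = m • (p • y1)
        rw [smul_smul]; exact hxy1
    obtain ⟨C₁, hC₁inf, hC₁sup⟩ := ih q hqlt hq P hPq N₁ hN₁pure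
    set C₁' : AddSubgroup B := C₁.map P.subtype with hC₁'def
    set B' : AddSubgroup B := C₁'.comap (smulH p B) with hB'def
    have hmemB' : ∀ b : B, b ∈ B' ↔ p • b ∈ C₁' := fun b => Iff.rfl
    -- pN and C₁' intersect trivially
    have hdisj : ∀ z : B, z ∈ pN → z ∈ C₁' → z = 0 := by
      intro z hzN hzC
      obtain ⟨v, hv, hvz⟩ := AddSubgroup.mem_map.mp hzC
      have hvN : v ∈ N₁ := by
        rw [AddSubgroup.mem_addSubgroupOf]
        show (v : B) ∈ pN
        rw [show (v : B) = z from hvz]; exact hzN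
      have hmem : v ∈ N₁ ⊓ C₁ := AddSubgroup.mem_inf.mpr ⟨hvN, hv⟩
      rw [hC₁inf, AddSubgroup.mem_bot] at hmem
      rw [← hvz, hmem]; rfl
    -- B = N + B'
    have hsum : ∀ b : B, ∃ x ∈ N, b - x ∈ B' := by
      intro b
      have hpb : p • b ∈ P := ⟨b, rfl⟩
      have hmem : (⟨p • b, hpb⟩ : P) ∈ N₁ ⊔ C₁ := by rw [hC₁sup]; trivial
      obtain ⟨u, hu, v, hv, huv⟩ := AddSubgroup.mem_sup.mp hmem
      rw [AddSubgroup.mem_addSubgroupOf] at hu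
      obtain ⟨x, hx, hxu⟩ := AddSubgroup.mem_map.mp hu
      refine ⟨x, hx, ?_⟩
      show p • (b - x) ∈ C₁'
      have heq : p • (b - x) = (v : B) := by
        have h2 : (u : B) + (v : B) = p • b := congrArg Subtype.val huv
        have h3 : (u : B) = p • x := by rw [← hxu]; rfl
        rw [smul_sub]
        rw [← h2, h3]
        abel
      rw [heq]
      exact AddSubgroup.mem_map.mpr ⟨v, hv, rfl⟩
    -- the quotient vector space
    set Q : AddSubgroup B' := (smulH p B').range with hQdef
    have hVp : ∀ v : (↥B') ⧸ Q, p • v = 0 := by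
      intro v
      induction v using QuotientAddGroup.induction_on with
      | H b =>
        rw [← QuotientAddGroup.mk_nsmul]
        exact (QuotientAddGroup.eq_zero_iff _).mpr ⟨b, rfl⟩
    letI : Module (ZMod p) ((↥B') ⧸ Q) := zmodModuleOfTorsion p _ hVp
    haveI : Fact p.Prime := ⟨hp⟩
    set π := QuotientAddGroup.mk' Q with hπdef
    set NB' : AddSubgroup B' := N.addSubgroupOf B' with hNB'def
    set Nbar : Submodule (ZMod p) ((↥B') ⧸ Q) := AddSubgroup.toZModSubmodule p (NB'.map π)
      with hNbardef
    obtain ⟨W, hW⟩ := Submodule.exists_isCompl Nbar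
    set C₀ : AddSubgroup B' := W.toAddSubgroup.comap π with hC₀def
    refine ⟨C₀.map B'.subtype, ?_, ?_⟩
    · -- disjointness
      rw [eq_bot_iff]
      intro x hx
      obtain ⟨hxN, hxC⟩ := AddSubgroup.mem_inf.mp hx
      obtain ⟨c, hc, hcx⟩ := AddSubgroup.mem_map.mp hxC
      have hcN : c ∈ NB' := by
        rw [AddSubgroup.mem_addSubgroupOf]
        show (c : B) ∈ N
        rw [show (c : B) = x from hcx]; exact hxN
      have hπc : π c ∈ Nbar := by
        rw [hNbardef, AddSubgroup.mem_toZModSubmodule]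
        exact AddSubgroup.mem_map.mpr ⟨c, hcN, rfl⟩
      have hπc0 : π c = 0 := Submodule.disjoint_def.mp hW.1 _ hπc hc
      have hcQ : c ∈ Q := (QuotientAddGroup.eq_zero_iff c).mp hπc0
      obtain ⟨b'', hb''⟩ := hcQ
      have hxpb : x = p • (b'' : B) := by
        rw [← hcx, ← hb'']; rfl
      have hxC₁' : x ∈ C₁' := by
        rw [hxpb]; exact b''.2
      obtain ⟨y, hy, hxy⟩ := hpure p x hxN ⟨(b'' : B), hxpb⟩
      have hxpN : x ∈ pN := AddSubgroup.mem_map.mpr ⟨y, hy, hxy.symm⟩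
      rw [AddSubgroup.mem_bot]
      exact hdisj x hxpN hxC₁'
    · -- sup
      rw [eq_top_iff]
      intro b _
      obtain ⟨x, hxN, hbB'⟩ := hsum b
      set b1 : B' := ⟨b - x, hbB'⟩ with hb1def
      have hmem : π b1 ∈ Nbar ⊔ W := by rw [codisjoint_iff.mp hW.2]; exact Submodule.mem_top
      obtain ⟨u, hu, w, hw, huw⟩ := Submodule.mem_sup.mp hmem
      have hu' : u ∈ NB'.map π := by
        rw [hNbardef, AddSubgroup.mem_toZModSubmodule] at hu
        exact hu
      obtain ⟨n₂, hn₂, hun⟩ := AddSubgroup.mem_map.mp hu'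
      have hdiff : b1 - n₂ ∈ C₀ := by
        show π (b1 - n₂) ∈ W
        rw [map_sub, hun]
        have : π b1 - u = w := by rw [← huw]; abel
        rw [this]; exact hw
      have hb : b = (x + (n₂ : B)) + ((b1 - n₂ : B') : B) := by
        have : ((b1 - n₂ : B') : B) = (b - x) - (n₂ : B) := rfl
        rw [this]; abel
      rw [hb]
      apply AddSubgroup.add_mem
      · apply AddSubgroup.mem_sup_left
        exact N.add_mem hxN (AddSubgroup.mem_addSubgroupOf.mp hn₂)
      · exact AddSubgroup.mem_sup_right (AddSubgroup.mem_map.mpr ⟨b1 - n₂, hdiff, rfl⟩)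

/-- Let `δ : A → B` be a homomorphism of `ℤ/nℤ`-modules such that for every divisor `m` of
`n` the induced map `A/mA → B/mB` is injective.  Then `δ(A)` is a direct summand of `B`. -/
theorem stmt8 (n : ℕ) (hn : 0 < n) (A B : Type*) [AddCommGroup A] [Module (ZMod n) A]
    [AddCommGroup B] [Module (ZMod n) B] (δ : A →ₗ[ZMod n] B)
    (hinj : ∀ m : ℕ, m ∣ n → ∀ a : A, (∃ b : B, δ a = m • b) → ∃ a' : A, a = m • a') :
    ∃ C : Submodule (ZMod n) B, IsCompl (LinearMap.range δ) C := by
  have hB : ∀ b : B, n • b = 0 := by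
    intro b
    rw [← Nat.cast_smul_eq_nsmul (ZMod n) n b, ZMod.natCast_self, zero_smul]
  set N : AddSubgroup B := (LinearMap.range δ).toAddSubgroup with hNdef
  have hpure : ∀ (m : ℕ) (x : B), x ∈ N → (∃ b : B, x = m • b) → ∃ y ∈ N, x = m • y := by
    rintro m x hx ⟨b, hb⟩
    obtain ⟨a, rfl⟩ := hx
    have hg : δ a = Nat.gcd m n • ((m / Nat.gcd m n) • b) := by
      rw [smul_smul, Nat.mul_div_cancel' (Nat.gcd_dvd_left m n)]
      exact hb
    obtain ⟨a', ha'⟩ := hinj (Nat.gcd m n) (Nat.gcd_dvd_right m n) a ⟨_, hg⟩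
    have hδ : δ a = Nat.gcd m n • δ a' := by rw [ha', map_nsmul]
    obtain ⟨z, hz⟩ := bezout_helper hB m (δ a) (δ a') hδ
    have ha'N : δ a' ∈ N := by
      rw [hNdef, Submodule.mem_toAddSubgroup]
      exact ⟨a', rfl⟩
    exact ⟨z • δ a', AddSubgroup.zsmul_mem _ ha'N z, hz⟩
  obtain ⟨C, hinf, hsup⟩ := key_lemma n hn B hB N hpure
  refine ⟨AddSubgroup.toZModSubmodule n C, ?_⟩
  have hNC : IsCompl N C := ⟨disjoint_iff.mpr hinf, codisjoint_iff.mpr hsup⟩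
  have hmap := (AddSubgroup.toZModSubmodule n).isCompl hNC
  rwa [hNdef, Submodule.toAddSubgroup_toZModSubmodule] at hmap
end

section
/- Let n ∈ Z_{>0}, and let δ : A → B be a homomorphism of Z/nZ-modules with cokernel C such that for every divisor m of n, the map B[m] → C[m] on m-torsion subgroups is surjective. If moreover δ is injective, then the surjection B → C splits, and hence δ(A) is a direct summand of B. -/
open Submodule LinearMap Function

section aux

universe u v

variable {n : ℕ}

/-- If `p • c ∈ D` and `a • c ∈ D` with `p` prime not dividing `a`, then `c ∈ D`. -/
private lemma combo_mem {C : Type v} [AddCommGroup C] [Module (ZMod n) C]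
    {D : Submodule (ZMod n) C} {c : C} {p a : ℕ} (hp : p.Prime) (hpa : ¬ p ∣ a)
    (h1 : p • c ∈ D) (h2 : a • c ∈ D) : c ∈ D := by
  have hg : Nat.gcd p a = 1 := (Nat.Prime.coprime_iff_not_dvd hp).2 hpa
  have hb := Nat.gcd_eq_gcd_ab p a
  have hsm : ∀ (k : ℕ) (u : ℤ), u • (k • c) = (u * k) • c := by
    intro k u; rw [← natCast_zsmul c k, smul_smul]
  have hc : c = Nat.gcdA p a • (p • c) + Nat.gcdB p a • (a • c) := by
    rw [hsm p, hsm a, ← add_smul]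
    have h1 : (Nat.gcdA p a * ↑p + Nat.gcdB p a * ↑a : ℤ) = 1 := by
      rw [mul_comm (Nat.gcdA p a), mul_comm (Nat.gcdB p a), ← hb, hg]; norm_num
    rw [h1, one_smul]
  rw [hc]
  exact add_mem (zsmul_mem h1 _) (zsmul_mem h2 _)

/-- Extend a partial section of `π` by one element `c`, given a compatible preimage `b`. -/
private lemma ext_step {B : Type u} {C : Type v} [AddCommGroup B] [Module (ZMod n) B]
    [AddCommGroup C] [Module (ZMod n) C] (π : B →ₗ[ZMod n] C)
    (D : Submodule (ZMod n) C) (σ : ↥D →ₗ[ZMod n] B)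
    (hσ : ∀ x : D, π (σ x) = x)
    (c : C) (b : B) (hπb : π b = c)
    (hkey : ∀ (t : ZMod n) (h : t • c ∈ D), σ ⟨t • c, h⟩ = t • b) :
    ∃ σ' : ↥(D ⊔ span (ZMod n) {c}) →ₗ[ZMod n] B,
      (∀ (x : ↥(D ⊔ span (ZMod n) {c})) (hx : (x : C) ∈ D), σ' x = σ ⟨x, hx⟩) ∧
      (∀ x : ↥(D ⊔ span (ZMod n) {c}), π (σ' x) = x) := by
  set ρ : (D × ZMod n) →ₗ[ZMod n] C :=
    D.subtype.comp (LinearMap.fst _ _ _) +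
      (LinearMap.toSpanSingleton (ZMod n) C c).comp (LinearMap.snd _ _ _) with hρdef
  set ψ : (D × ZMod n) →ₗ[ZMod n] B :=
    σ.comp (LinearMap.fst _ _ _) +
      (LinearMap.toSpanSingleton (ZMod n) B b).comp (LinearMap.snd _ _ _) with hψdef
  have hρ : ∀ w : ↥D × ZMod n, ρ w = (w.1 : C) + w.2 • c := fun w => rfl
  have hψ : ∀ w : ↥D × ZMod n, ψ w = σ w.1 + w.2 • b := fun w => rfl
  have hker : ker ρ ≤ ker ψ := by
    rintro ⟨d, t⟩ hw
    have h0 : (d : C) + t • c = 0 := hw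
    have htc : t • c ∈ D := by
      have he : t • c = -(d : C) := by
        rw [eq_neg_iff_add_eq_zero, add_comm]; exact h0
      rw [he]; exact D.neg_mem d.2
    have hkey' := hkey t htc
    have hd : d + (⟨t • c, htc⟩ : D) = 0 := by
      apply Subtype.ext; simpa using h0
    simp only [mem_ker, hψ]
    rw [← hkey', ← map_add, hd, map_zero]
  have hrange : range ρ = D ⊔ span (ZMod n) {c} := by
    apply le_antisymm
    · rintro x ⟨w, rfl⟩
      rw [hρ]
      exact add_mem (le_sup_left (α := Submodule (ZMod n) C) w.1.2)
        (le_sup_right (α := Submodule (ZMod n) C) (smul_mem _ _ (subset_span rfl)))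
    · refine sup_le ?_ ?_
      · intro d hd
        exact ⟨(⟨d, hd⟩, 0), by simp [hρ]⟩
      · rw [span_le]
        rintro x rfl
        exact ⟨(0, 1), by simp [hρ]⟩
  let e := ρ.quotKerEquivRange
  let q := (ker ρ).liftQ ψ hker
  let e2 : ↥(D ⊔ span (ZMod n) {c}) ≃ₗ[ZMod n] ↥(range ρ) := LinearEquiv.ofEq _ _ hrange.symm
  let σ' : ↥(D ⊔ span (ZMod n) {c}) →ₗ[ZMod n] B :=
    q.comp ((e.symm.toLinearMap).comp e2.toLinearMap)
  have happ : ∀ (w : ↥D × ZMod n) (h : ρ w ∈ D ⊔ span (ZMod n) {c}),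
      σ' ⟨ρ w, h⟩ = ψ w := by
    intro w h
    have h1 : e2 ⟨ρ w, h⟩ = ⟨ρ w, LinearMap.mem_range_self ρ w⟩ := rfl
    show q (e.symm (e2 ⟨ρ w, h⟩)) = ψ w
    have h2 : e (Submodule.Quotient.mk w) = ⟨ρ w, LinearMap.mem_range_self ρ w⟩ :=
      Subtype.ext (ρ.quotKerEquivRange_apply_mk w)
    rw [h1, ← h2, e.symm_apply_apply]
    exact Submodule.liftQ_apply _ ψ w
  refine ⟨σ', ?_, ?_⟩
  · intro x hx
    have hw : ρ (⟨x, hx⟩, 0) = (x : C) := by rw [hρ]; simp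
    have h2 := happ (⟨x, hx⟩, 0) (by rw [hw]; exact x.2)
    have hx' : (⟨ρ (⟨x, hx⟩, 0), by rw [hw]; exact x.2⟩ : ↥(D ⊔ span (ZMod n) {c})) = x :=
      Subtype.ext hw
    rw [hx'] at h2
    rw [h2, hψ]; simp
  · intro x
    obtain ⟨w, hw⟩ : ∃ w, ρ w = (x : C) := by
      have hx2 : (x : C) ∈ range ρ := by rw [hrange]; exact x.2
      exact hx2
    have h2 := happ w (by rw [hw]; exact x.2)
    have hx' : (⟨ρ w, by rw [hw]; exact x.2⟩ : ↥(D ⊔ span (ZMod n) {c})) = x :=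
      Subtype.ext hw
    rw [hx'] at h2
    rw [h2, hψ, map_add, hσ, map_smul, hπb, ← hρ, hw]

end aux

section key

universe u v
variable {n : ℕ}

private lemma key [NeZero n] : ∀ (N : ℕ), 0 < N →
    ∀ {B : Type u} {C : Type v} [AddCommGroup B] [Module (ZMod n) B]
      [AddCommGroup C] [Module (ZMod n) C] (π : B →ₗ[ZMod n] C), Surjective π →
      (∀ (m : ℕ) (c : C), m • c = 0 → ∃ b : B, m • b = 0 ∧ π b = c) →
      (∀ c : C, N • c = 0) →
      ∃ σ : C →ₗ[ZMod n] B, ∀ c, π (σ c) = c := by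
  intro N
  induction N using Nat.strong_induction_on with
  | _ N ih =>
    intro hN B C _ _ _ _ π hsurj hpure hbound
    by_cases hN1 : N = 1
    · subst hN1
      refine ⟨0, fun c => ?_⟩
      have h0 := hbound c
      rw [one_nsmul] at h0
      simp [h0]
    set p := N.minFac with hpdef
    have hp : p.Prime := Nat.minFac_prime hN1
    obtain ⟨M, hM⟩ := N.minFac_dvd
    have hMpos : 0 < M := by
      rcases Nat.eq_zero_or_pos M with h | h
      · subst h; rw [Nat.mul_zero] at hM; omega
      · exact h
    have hMlt : M < N := by
      rw [hM]
      calc M = 1 * M := (one_mul M).symm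
        _ < p * M := Nat.mul_lt_mul_of_lt_of_le hp.one_lt le_rfl hMpos
    set pB : Submodule (ZMod n) B :=
      LinearMap.range ((p : ℕ) • (LinearMap.id : B →ₗ[ZMod n] B)) with hpBdef
    set pC : Submodule (ZMod n) C :=
      LinearMap.range ((p : ℕ) • (LinearMap.id : C →ₗ[ZMod n] C)) with hpCdef
    have hpBmem : ∀ x : B, p • x ∈ pB := fun x => ⟨x, by simp⟩
    have hpCmem : ∀ x : C, p • x ∈ pC := fun x => ⟨x, by simp⟩
    have hpBmem' : ∀ x ∈ pB, ∃ y, p • y = x := by rintro x ⟨y, rfl⟩; exact ⟨y, by simp⟩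
    have hpCmem' : ∀ x ∈ pC, ∃ y, p • y = x := by rintro x ⟨y, rfl⟩; exact ⟨y, by simp⟩
    have hres : ∀ x ∈ pB, π x ∈ pC := by
      rintro x ⟨y, rfl⟩
      refine ⟨π y, ?_⟩
      simp [map_nsmul]
    set π' : ↥pB →ₗ[ZMod n] ↥pC := π.restrict hres with hπ'def
    have hπ'app : ∀ x : pB, (π' x : C) = π x := fun x => rfl
    have hsurj' : Surjective π' := by
      rintro ⟨x, hx⟩
      obtain ⟨y, hy⟩ := hpCmem' x hx
      obtain ⟨b0, hb0⟩ := hsurj y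
      refine ⟨⟨p • b0, hpBmem b0⟩, ?_⟩
      apply Subtype.ext
      show π (p • b0) = x
      rw [map_nsmul, hb0, hy]
    have hpure' : ∀ (m : ℕ) (x : ↥pC), m • x = 0 → ∃ b : ↥pB, m • b = 0 ∧ π' b = x := by
      intro m x hmx
      obtain ⟨c0, hc0⟩ := hpCmem' (x : C) x.2
      have hz : (m * p) • c0 = 0 := by
        rw [mul_smul, hc0]
        have : ((m • x : ↥pC) : C) = m • (x : C) := rfl
        rw [show m • (x : C) = ((m • x : ↥pC) : C) from rfl, hmx]
        rfl
      obtain ⟨b', hb'1, hb'2⟩ := hpure (m * p) c0 hz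
      refine ⟨⟨p • b', hpBmem b'⟩, ?_, ?_⟩
      · apply Subtype.ext
        show m • (p • b') = 0
        rw [← mul_smul]
        exact hb'1
      · apply Subtype.ext
        show π (p • b') = (x : C)
        rw [map_nsmul, hb'2, hc0]
    have hbound' : ∀ x : ↥pC, M • x = 0 := by
      intro x
      obtain ⟨c0, hc0⟩ := hpCmem' (x : C) x.2
      apply Subtype.ext
      show M • (x : C) = 0
      rw [← hc0, ← mul_smul, mul_comm, ← hM]
      exact hbound c0
    obtain ⟨σ₀, hσ₀⟩ := ih M hMlt hMpos π' hsurj' hpure' hbound'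
    set τ : ↥pC →ₗ[ZMod n] B := pB.subtype.comp σ₀ with hτdef
    have hτ1 : ∀ x : pC, π (τ x) = (x : C) := by
      intro x
      show π ((σ₀ x : B)) = (x : C)
      rw [show π ((σ₀ x : B)) = ((π' (σ₀ x) : C)) from rfl, hσ₀]
    have hτ2 : ∀ x : pC, τ x ∈ pB := fun x => (σ₀ x).2
    -- Zorn's lemma on partial sections
    set S : Set (C →ₗ.[ZMod n] B) := {f | pC ≤ f.domain ∧ (∀ x : f.domain, π (f x) = (x : C)) ∧
      (∀ x : f.domain, (x : C) ∈ pC → f x ∈ pB)} with hSdef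
    have hf₀ : (⟨pC, τ⟩ : C →ₗ.[ZMod n] B) ∈ S := ⟨le_rfl, hτ1, fun x _ => hτ2 x⟩
    have hchainub : ∀ ch ⊆ S, IsChain (· ≤ ·) ch → ∀ y ∈ ch, ∃ ub ∈ S, ∀ z ∈ ch, z ≤ ub := by
      intro ch hchS hchain y hy
      have hdir : DirectedOn (· ≤ ·) ch := hchain.directedOn
      set ub := LinearPMap.sSup ch hdir with hubdef
      have hmemdom : ∀ x : ub.domain, ∃ l ∈ ch, ∃ h : (x : C) ∈ l.domain,
          ub x = l ⟨x, h⟩ := by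
        intro x
        have hx : (x : C) ∈ sSup (LinearPMap.domain '' ch) := x.2
        have hdir' : DirectedOn (· ≤ ·) (LinearPMap.domain '' ch) := by
          rintro _ ⟨f1, h1, rfl⟩ _ ⟨f2, h2, rfl⟩
          obtain ⟨g, hg, le1, le2⟩ := hdir f1 h1 f2 h2
          exact ⟨g.domain, ⟨g, hg, rfl⟩, le1.1, le2.1⟩
        obtain ⟨_, ⟨l, hlc, rfl⟩, hxl⟩ :=
          (Submodule.mem_sSup_of_directed (Set.Nonempty.image LinearPMap.domain ⟨y, hy⟩) hdir').1 hx
        refine ⟨l, hlc, hxl, ?_⟩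
        exact ((LinearPMap.le_sSup hdir hlc).2 (rfl : ((⟨(x : C), hxl⟩ : l.domain) : C) = x)).symm
      refine ⟨ub, ⟨?_, ?_, ?_⟩, fun z hz => LinearPMap.le_sSup hdir hz⟩
      · exact le_trans (hchS hy).1 (LinearPMap.le_sSup hdir hy).1
      · intro x
        obtain ⟨l, hlc, hxl, heq⟩ := hmemdom x
        rw [heq]
        exact (hchS hlc).2.1 _
      · intro x hx
        obtain ⟨l, hlc, hxl, heq⟩ := hmemdom x
        rw [heq]
        exact (hchS hlc).2.2 _ hx
    obtain ⟨f, hle₀, hfmax⟩ := zorn_le_nonempty₀ S hchainub ⟨pC, τ⟩ hf₀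
    -- the maximal partial section is total
    have hfS : f ∈ S := hfmax.1
    have htop : f.domain = ⊤ := by
      by_contra hne
      obtain ⟨c₀, hc₀⟩ : ∃ c₀, c₀ ∉ f.domain := by
        by_contra h
        push_neg at h
        exact hne (Submodule.eq_top_iff'.2 h)
      have hpc : p • c₀ ∈ pC := hpCmem c₀
      have hpcD : p • c₀ ∈ f.domain := hfS.1 hpc
      set x := f ⟨p • c₀, hpcD⟩ with hxdef
      have hx_pB : x ∈ pB := hfS.2.2 ⟨p • c₀, hpcD⟩ hpc
      obtain ⟨y, hy⟩ := hpBmem' x hx_pB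
      obtain ⟨b₀, hb₀⟩ := hsurj c₀
      have hπx : π x = p • c₀ := hfS.2.1 ⟨p • c₀, hpcD⟩
      have hv : p • (π (b₀ - y)) = 0 := by
        have h2 : π (p • (b₀ - y)) = 0 := by
          rw [smul_sub, map_sub, hy, hπx, map_nsmul, hb₀, sub_self]
        exact (map_nsmul π p (b₀ - y)).symm.trans h2
      obtain ⟨w', hw'1, hw'2⟩ := hpure p (π (b₀ - y)) hv
      set b := y + w' with hbdef
      have hπb : π b = c₀ := by
        rw [hbdef, map_add, hw'2, map_sub, hb₀]
        abel
      have hpb : p • b = x := by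
        rw [hbdef, smul_add, hw'1, add_zero, hy]
      have hkey : ∀ (t : ZMod n) (h : t • c₀ ∈ f.domain), f.toFun ⟨t • c₀, h⟩ = t • b := by
        intro t h
        obtain ⟨a, rfl⟩ := ZMod.natCast_zmod_surjective t
        by_cases hpa : p ∣ a
        · obtain ⟨s, rfl⟩ := hpa
          have h1 : ((p * s : ℕ) : ZMod n) • c₀ = s • (p • c₀) := by
            rw [Nat.cast_smul_eq_nsmul, mul_comm, mul_smul]
          have hsub : (⟨((p * s : ℕ) : ZMod n) • c₀, h⟩ : f.domain) =
              s • (⟨p • c₀, hpcD⟩ : f.domain) := by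
            apply Subtype.ext
            exact h1
          calc f.toFun ⟨((p * s : ℕ) : ZMod n) • c₀, h⟩
              = f.toFun (s • (⟨p • c₀, hpcD⟩ : f.domain)) := by rw [hsub]
            _ = s • f.toFun ⟨p • c₀, hpcD⟩ := map_nsmul f.toFun s _
            _ = s • (p • b) := by rw [show f.toFun ⟨p • c₀, hpcD⟩ = x from rfl, hpb]
            _ = ((p * s : ℕ) : ZMod n) • b := by
                rw [← mul_smul, mul_comm s p, Nat.cast_smul_eq_nsmul]
        · exfalso
          have h' : a • c₀ ∈ f.domain := by
            rw [← Nat.cast_smul_eq_nsmul (ZMod n) a c₀]; exact h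
          exact hc₀ (combo_mem hp hpa hpcD h')
      obtain ⟨σ', hσ'1, hσ'2⟩ := ext_step π f.domain f.toFun hfS.2.1 c₀ b hπb hkey
      set f' : C →ₗ.[ZMod n] B := ⟨f.domain ⊔ span (ZMod n) {c₀}, σ'⟩ with hf'def
      have hff' : f ≤ f' := by
        refine ⟨le_sup_left, ?_⟩
        intro u w huw
        have hw : (w : C) ∈ f.domain := huw ▸ u.2
        rw [show f' w = σ' w from rfl, hσ'1 w hw]
        congr 1
        exact Subtype.ext huw
      have hf'S : f' ∈ S := by
        refine ⟨le_trans hfS.1 le_sup_left, hσ'2, ?_⟩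
        intro u hu
        have hw : (u : C) ∈ f.domain := hfS.1 hu
        rw [show f' u = σ' u from rfl, hσ'1 u hw]
        exact hfS.2.2 ⟨u, hw⟩ hu
      have hle' : f' ≤ f := hfmax.2 hf'S hff'
      exact hc₀ (hle'.1 (le_sup_right (α := Submodule (ZMod n) C) (subset_span rfl)))
    refine ⟨f.toFun.comp ((LinearEquiv.ofTop f.domain htop).symm.toLinearMap), fun c => ?_⟩
    have h1 := hfS.2.1 ((LinearEquiv.ofTop f.domain htop).symm c)
    exact h1.trans (LinearEquiv.coe_ofTop_symm_apply f.domain c)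

end key

/-- Let `δ : A → B` be an injective homomorphism of `ℤ/nℤ`-modules with cokernel `C` such
that for every divisor `m` of `n` the map `B[m] → C[m]` on `m`-torsion is surjective.
Then the surjection `B → C` splits, and hence `δ(A)` is a direct summand of `B`. -/
theorem stmt9 (n : ℕ) (hn : 0 < n) (A B : Type*) [AddCommGroup A] [Module (ZMod n) A]
    [AddCommGroup B] [Module (ZMod n) B] (δ : A →ₗ[ZMod n] B)
    (hδ : Function.Injective δ)
    (htors : ∀ m : ℕ, m ∣ n → ∀ c : B ⧸ LinearMap.range δ, m • c = 0 →
      ∃ b : B, m • b = 0 ∧ (LinearMap.range δ).mkQ b = c) :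
    (∃ σ : (B ⧸ LinearMap.range δ) →ₗ[ZMod n] B,
        ∀ c, (LinearMap.range δ).mkQ (σ c) = c) ∧
      ∃ C' : Submodule (ZMod n) B, IsCompl (LinearMap.range δ) C' := by
  haveI : NeZero n := ⟨hn.ne'⟩
  set K := LinearMap.range δ with hKdef
  set π := K.mkQ with hπdef
  have hsurj : Surjective π := Submodule.mkQ_surjective K
  have hnsmul : ∀ c : B ⧸ K, n • c = 0 := fun c => by
    rw [← Nat.cast_smul_eq_nsmul (ZMod n), ZMod.natCast_self, zero_smul]
  have hpure : ∀ (m : ℕ) (c : B ⧸ K), m • c = 0 → ∃ b : B, m • b = 0 ∧ π b = c := by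
    intro m c hmc
    rcases Nat.eq_zero_or_pos m with rfl | hm
    · obtain ⟨b, hb⟩ := hsurj c
      exact ⟨b, by simp, hb⟩
    · set g := Nat.gcd m n with hgdef
      have hgn : g ∣ n := Nat.gcd_dvd_right m n
      have hgm : g ∣ m := Nat.gcd_dvd_left m n
      have hgc : g • c = 0 := by
        have hsm : ∀ (k : ℕ) (u : ℤ), u • (k • c) = (u * k) • c := fun k u => by
          rw [← natCast_zsmul c k, smul_smul]
        have h2 : (g : ℤ) • c = Nat.gcdA m n • (m • c) + Nat.gcdB m n • (n • c) := by
          rw [hsm, hsm, ← add_smul, mul_comm (Nat.gcdA m n), mul_comm (Nat.gcdB m n),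
            ← Nat.gcd_eq_gcd_ab]
        rw [← natCast_zsmul c g, h2, hmc, hnsmul c, smul_zero, smul_zero, add_zero]
      obtain ⟨b, hgb, hπb⟩ := htors g hgn c hgc
      obtain ⟨k, hk⟩ := hgm
      exact ⟨b, by rw [hk, mul_comm, mul_smul, hgb, smul_zero], hπb⟩
  obtain ⟨σ, hσ⟩ := key (n := n) n hn π hsurj hpure hnsmul
  refine ⟨⟨σ, hσ⟩, LinearMap.range σ, ?_, ?_⟩
  · rw [Submodule.disjoint_def]
    rintro x hxK ⟨c, rfl⟩
    have h0 : c = 0 := by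
      have h1 := hσ c
      have h2 : π (σ c) = 0 := by
        rw [hπdef, Submodule.mkQ_apply, Submodule.Quotient.mk_eq_zero]
        exact hxK
      rw [h2] at h1
      exact h1.symm
    rw [h0, map_zero]
  · rw [codisjoint_iff, eq_top_iff']
    intro b
    refine Submodule.mem_sup.2 ⟨b - σ (π b), ?_, σ (π b), ⟨π b, rfl⟩, by abel⟩
    have h1 : π (b - σ (π b)) = 0 := by rw [map_sub, hσ, sub_self]
    rw [hπdef, Submodule.mkQ_apply, Submodule.Quotient.mk_eq_zero] at h1
    exact h1
end

section
/- Let p be a prime, e ≥ 1, and S_e = SL_2(Z/p^eZ). Define Γ_m = ker(SL_2(Z/p^eZ) → SL_2(Z/p^mZ)) for 1 ≤ m ≤ e. Then Γ_2 = Γ_1^2 [Γ_1, Γ_1], i.e., the subgroup of Γ_1 generated by squares and commutators of elements of Γ_1 equals Γ_2, when p = 2. -/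
open scoped commutatorElement

abbrev SL (N : ℕ) := Matrix.SpecialLinearGroup (Fin 2) (ZMod N)

def red {M N : ℕ} (h : N ∣ M) : SL M →* SL N :=
  Matrix.SpecialLinearGroup.map (ZMod.castHom h (ZMod N))

def gens (e : ℕ) (h : 2^1 ∣ 2^e) : Set (SL (2^e)) :=
  {x | ∃ a ∈ (red h).ker, x = a ^ 2} ∪
    {x | ∃ a ∈ (red h).ker, ∃ b ∈ (red h).ker, x = ⁅a, b⁆}

lemma cast_zero {d N : ℕ} [NeZero N] (h : d ∣ N) {v : ZMod N}
    (hv : ZMod.castHom h (ZMod d) v = 0) : ∃ y : ZMod N, v = (d : ZMod N) * y := by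
  haveI : NeZero d := ⟨fun hd => (NeZero.ne N) (by simpa [hd] using h)⟩
  have h1 : ((v.val : ℕ) : ZMod d) = 0 := by
    rwa [ZMod.castHom_apply, ← ZMod.natCast_val] at hv
  rw [ZMod.natCast_eq_zero_iff] at h1
  obtain ⟨t, ht⟩ := h1
  refine ⟨(t : ZMod N), ?_⟩
  have := ZMod.natCast_rightInverse (n := N) v
  rw [← this, ht]; push_cast; ring

lemma cast_one {d N : ℕ} [NeZero N] (h : d ∣ N) {v : ZMod N}
    (hv : ZMod.castHom h (ZMod d) v = 1) : ∃ y : ZMod N, v = 1 + (d : ZMod N) * y := by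
  obtain ⟨y, hy⟩ := cast_zero h (v := v - 1)
    (by rw [map_sub, hv, map_one, sub_self])
  exact ⟨y, by linear_combination hy⟩

set_option maxHeartbeats 1000000 in
lemma ker_pi_le (n : ℕ) (hn : 2 ≤ n) (h1 : 2^1 ∣ 2^(n+1)) :
    MonoidHom.ker (red (M := 2^(n+1)) (pow_dvd_pow 2 (Nat.le_succ n))) ≤
      Subgroup.closure (gens (n+1) h1) := by
  intro k hk
  have hpow : (2 : ZMod (2^(n+1)))^(n+1) = 0 := by
    have := ZMod.natCast_self (2^(n+1)); push_cast at this; exact_mod_cast this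
  have htwo : (2 : ZMod (2^(n+1))) * (2 : ZMod (2^(n+1)))^n = 0 := by
    rw [← pow_succ']; exact hpow
  have hnn : (2 : ZMod (2^(n+1)))^n * (2 : ZMod (2^(n+1)))^n = 0 := by
    rw [← pow_add]
    have h' : (2 : ZMod (2^(n+1)))^(n+n) = (2 : ZMod (2^(n+1)))^(n+1) * (2 : ZMod (2^(n+1)))^(n-1) := by
      rw [← pow_add]; congr 1; omega
    rw [h', hpow, zero_mul]
  have hhalf : (2 : ZMod (2^(n+1))) * (2 : ZMod (2^(n+1)))^(n-1) = (2 : ZMod (2^(n+1)))^n := by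
    rw [← pow_succ']; congr 1; omega
  have h4 : (4 : ZMod (2^(n+1))) * ((2 : ZMod (2^(n+1)))^(n-1) * (2 : ZMod (2^(n+1)))^(n-1)) = 0 := by
    linear_combination ((2 : ZMod (2^(n+1))) * (2 : ZMod (2^(n+1)))^(n-1) + (2 : ZMod (2^(n+1)))^n) * hhalf + hnn
  have h6 : (2 : ZMod (2^(n+1)))^(n-1) * (2 : ZMod (2^(n+1)))^n = 0 := by
    rw [← pow_add]
    have h' : (2 : ZMod (2^(n+1)))^(n-1+n) = (2 : ZMod (2^(n+1)))^(n+1) * (2 : ZMod (2^(n+1)))^(n-2) := by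
      rw [← pow_add]; congr 1; omega
    rw [h', hpow, zero_mul]
  rw [MonoidHom.mem_ker] at hk
  have hkmat := congrArg Subtype.val hk
  have hent : ∀ i j, (ZMod.castHom (pow_dvd_pow 2 (Nat.le_succ n)) (ZMod (2^n))) (k.1 i j)
      = (1 : Matrix (Fin 2) (Fin 2) (ZMod (2^n))) i j :=
    fun i j => congrFun (congrFun hkmat i) j
  obtain ⟨t, ht⟩ := cast_one (pow_dvd_pow 2 (Nat.le_succ n)) (by simpa [Matrix.one_apply] using hent 0 0)
  obtain ⟨y, hy⟩ := cast_zero (pow_dvd_pow 2 (Nat.le_succ n)) (by simpa [Matrix.one_apply] using hent 0 1)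
  obtain ⟨z, hz⟩ := cast_zero (pow_dvd_pow 2 (Nat.le_succ n)) (by simpa [Matrix.one_apply] using hent 1 0)
  push_cast at ht hy hz
  have hdet := k.2
  rw [Matrix.det_fin_two] at hdet
  have hsq : k.1 0 0 * k.1 0 0 = 1 := by
    rw [ht]; linear_combination t * htwo + t * t * hnn
  have h11 : k.1 1 1 = k.1 0 0 := by
    have h0110 : k.1 0 1 * k.1 1 0 = 0 := by rw [hy, hz]; linear_combination (y*z) * hnn
    calc k.1 1 1 = (k.1 0 0 * k.1 0 0) * k.1 1 1 := by rw [hsq, one_mul]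
    _ = k.1 0 0 * (k.1 0 0 * k.1 1 1 - k.1 0 1 * k.1 1 0) := by rw [h0110]; ring
    _ = k.1 0 0 := by rw [hdet, mul_one]
  set A : SL (2^(n+1)) := ⟨!![(1 : ZMod (2^(n+1))), 2^(n-1) * y; 0, 1], by rw [Matrix.det_fin_two_of]; ring⟩ with hA
  set B : SL (2^(n+1)) := ⟨!![(1 : ZMod (2^(n+1))), 0; 2^(n-1) * z, 1], by rw [Matrix.det_fin_two_of]; ring⟩ with hB
  set c1 : SL (2^(n+1)) := ⟨!![(1 : ZMod (2^(n+1))), 0; 2, 1], by rw [Matrix.det_fin_two_of]; ring⟩ with hc1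
  set c2 : SL (2^(n+1)) := ⟨!![(1 : ZMod (2^(n+1))), 2^(n-1) * t; 0, 1], by rw [Matrix.det_fin_two_of]; ring⟩ with hc2
  set C : SL (2^(n+1)) := ⟨!![k.1 0 0, 0; 0, k.1 0 0], by
    rw [Matrix.det_fin_two_of]; rw [mul_comm]; simpa using hsq⟩ with hCdef
  have σ2 : (ZMod.castHom h1 (ZMod (2^1))) (2 : ZMod (2^(n+1))) = 0 := by
    rw [show (2 : ZMod (2^(n+1))) = ((2:ℕ) : ZMod (2^(n+1))) by push_cast; ring, map_natCast]
    decide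
  have σhalf : ∀ v : ZMod (2^(n+1)), (ZMod.castHom h1 (ZMod (2^1))) ((2 : ZMod (2^(n+1)))^(n-1) * v) = 0 := by
    intro v
    rw [map_mul, map_pow, σ2, zero_pow (by omega), zero_mul]
  have memhelp : ∀ (m : Matrix (Fin 2) (Fin 2) (ZMod (2^(n+1)))) (hm : m.det = 1),
      (ZMod.castHom h1 (ZMod (2^1))) (m 0 0) = 1 → (ZMod.castHom h1 (ZMod (2^1))) (m 0 1) = 0 →
      (ZMod.castHom h1 (ZMod (2^1))) (m 1 0) = 0 → (ZMod.castHom h1 (ZMod (2^1))) (m 1 1) = 1 →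
      (⟨m, hm⟩ : SL (2^(n+1))) ∈ (red h1).ker := by
    intro m hm e00 e01 e10 e11
    show (red h1) ⟨m, hm⟩ = 1
    refine Subtype.ext ?_
    show m.map (ZMod.castHom h1 (ZMod (2^1))) = (1 : Matrix (Fin 2) (Fin 2) (ZMod (2^1)))
    ext i j
    rw [Matrix.map_apply]
    fin_cases i <;> fin_cases j
    · simpa [Matrix.one_apply] using e00
    · simpa [Matrix.one_apply] using e01
    · simpa [Matrix.one_apply] using e10
    · simpa [Matrix.one_apply] using e11
  have memA : A ∈ (red h1).ker := by
    apply memhelp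
    · show (ZMod.castHom h1 (ZMod (2^1))) 1 = 1; exact map_one _
    · show (ZMod.castHom h1 (ZMod (2^1))) (2^(n-1) * y) = 0; exact σhalf y
    · show (ZMod.castHom h1 (ZMod (2^1))) 0 = 0; exact map_zero _
    · show (ZMod.castHom h1 (ZMod (2^1))) 1 = 1; exact map_one _
  have memB : B ∈ (red h1).ker := by
    apply memhelp
    · show (ZMod.castHom h1 (ZMod (2^1))) 1 = 1; exact map_one _
    · show (ZMod.castHom h1 (ZMod (2^1))) 0 = 0; exact map_zero _
    · show (ZMod.castHom h1 (ZMod (2^1))) (2^(n-1) * z) = 0; exact σhalf z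
    · show (ZMod.castHom h1 (ZMod (2^1))) 1 = 1; exact map_one _
  have memc1 : c1 ∈ (red h1).ker := by
    apply memhelp
    · show (ZMod.castHom h1 (ZMod (2^1))) 1 = 1; exact map_one _
    · show (ZMod.castHom h1 (ZMod (2^1))) 0 = 0; exact map_zero _
    · show (ZMod.castHom h1 (ZMod (2^1))) 2 = 0; exact σ2
    · show (ZMod.castHom h1 (ZMod (2^1))) 1 = 1; exact map_one _
  have memc2 : c2 ∈ (red h1).ker := by
    apply memhelp
    · show (ZMod.castHom h1 (ZMod (2^1))) 1 = 1; exact map_one _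
    · show (ZMod.castHom h1 (ZMod (2^1))) (2^(n-1) * t) = 0; exact σhalf t
    · show (ZMod.castHom h1 (ZMod (2^1))) 0 = 0; exact map_zero _
    · show (ZMod.castHom h1 (ZMod (2^1))) 1 = 1; exact map_one _
  have hcommEq : c1 * c2 = C * (c2 * c1) := by
    apply Subtype.ext
    rw [Matrix.SpecialLinearGroup.coe_mul, Matrix.SpecialLinearGroup.coe_mul,
      Matrix.SpecialLinearGroup.coe_mul]
    show (!![(1 : ZMod (2^(n+1))), 0; 2, 1]) * (!![(1 : ZMod (2^(n+1))), 2^(n-1) * t; 0, 1]) =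
      (!![k.1 0 0, 0; 0, k.1 0 0]) * ((!![(1 : ZMod (2^(n+1))), 2^(n-1) * t; 0, 1]) * (!![(1 : ZMod (2^(n+1))), 0; 2, 1]))
    rw [Matrix.mul_fin_two, Matrix.mul_fin_two, Matrix.mul_fin_two]
    rw [← Matrix.ext_iff]
    intro i j
    fin_cases i <;> fin_cases j <;>
      simp only [Matrix.cons_val', Matrix.cons_val_zero, Matrix.cons_val_one, Matrix.head_cons,
        Matrix.empty_val', Matrix.cons_val_fin_one, Matrix.head_fin_const, Matrix.of_apply,
        Fin.zero_eta, Fin.mk_one, ht]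
    · linear_combination (-t) * hhalf + (-t) * htwo + (-t*t*2) * h6
    · linear_combination (-t*t) * h6
    · linear_combination (-t) * htwo
    · linear_combination t * hhalf
  have hC : C = ⁅c1, c2⁆ := by
    have h' : ⁅c1, c2⁆ = (c1 * c2) * (c2 * c1)⁻¹ := by
      rw [commutatorElement_def, mul_inv_rev]; group
    rw [h', hcommEq, mul_inv_cancel_right]
  have hmain : k = A^2 * B^2 * C := by
    apply Subtype.ext
    rw [Matrix.SpecialLinearGroup.coe_mul, Matrix.SpecialLinearGroup.coe_mul,
      Matrix.SpecialLinearGroup.coe_pow, Matrix.SpecialLinearGroup.coe_pow, pow_two, pow_two]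
    show k.1 = (!![(1 : ZMod (2^(n+1))), 2^(n-1) * y; 0, 1] * !![(1 : ZMod (2^(n+1))), 2^(n-1) * y; 0, 1]) *
      (!![(1 : ZMod (2^(n+1))), 0; 2^(n-1) * z, 1] * !![(1 : ZMod (2^(n+1))), 0; 2^(n-1) * z, 1]) *
      (!![k.1 0 0, 0; 0, k.1 0 0])
    rw [Matrix.mul_fin_two, Matrix.mul_fin_two, Matrix.mul_fin_two, Matrix.mul_fin_two]
    nth_rewrite 1 [Matrix.eta_fin_two k.1]
    rw [← Matrix.ext_iff]
    intro i j
    fin_cases i <;> fin_cases j <;>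
      simp only [Matrix.cons_val', Matrix.cons_val_zero, Matrix.cons_val_one, Matrix.head_cons,
        Matrix.empty_val', Matrix.cons_val_fin_one, Matrix.head_fin_const, Matrix.of_apply,
        Fin.zero_eta, Fin.mk_one, h11, ht, hy, hz]
    · linear_combination (-(y*z*(1 + (2 : ZMod (2^(n+1)))^n*t))) * h4
    · linear_combination (-y) * hhalf + (-y*t*2) * h6
    · linear_combination (-z) * hhalf + (-z*t*2) * h6
    · ring
  rw [hmain]
  refine Subgroup.mul_mem _ (Subgroup.mul_mem _ ?_ ?_) ?_
  · exact Subgroup.subset_closure (Or.inl ⟨A, memA, rfl⟩)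
  · exact Subgroup.subset_closure (Or.inl ⟨B, memB, rfl⟩)
  · rw [hC]
    exact Subgroup.subset_closure (Or.inr ⟨c1, memc1, c2, memc2, rfl⟩)

lemma red_red {K M N : ℕ} (h1 : N ∣ M) (h2 : M ∣ K) (x : SL K) :
    red h1 (red h2 x) = red (dvd_trans h1 h2) x := by
  apply Subtype.ext
  simp only [red, Matrix.SpecialLinearGroup.map_apply_coe, RingHom.mapMatrix_apply,
    Matrix.map_map, ← RingHom.coe_comp, ZMod.castHom_comp]

lemma cast_lift {M N : ℕ} [NeZero N] (h : N ∣ M) (w : ZMod N) :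
    ZMod.castHom h (ZMod N) ((w.val : ZMod M)) = w := by
  rw [map_natCast]
  exact ZMod.natCast_rightInverse w

lemma red_surj (n : ℕ) (hn : 1 ≤ n) :
    Function.Surjective (red (M := 2^(n+1)) (pow_dvd_pow 2 (Nat.le_succ n))) := by
  intro y
  set R := ZMod (2^(n+1))
  have hpow : (2 : R)^(n+1) = 0 := by
    have := ZMod.natCast_self (2^(n+1)); push_cast at this; exact_mod_cast this
  have htwo : (2 : R) * (2:R)^n = 0 := by rw [← pow_succ']; exact hpow
  set φ := ZMod.castHom (pow_dvd_pow 2 (Nat.le_succ n)) (ZMod (2^n)) with hφ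
  set σ := ZMod.castHom (show 2 ∣ 2^(n+1) from dvd_pow_self 2 (Nat.succ_ne_zero n)) (ZMod 2) with hσ
  have hσ2 : σ (2:R) = 0 := by
    rw [show (2:R) = ((2:ℕ):R) by push_cast; ring, map_natCast]; decide
  have hσ2n : σ ((2:R)^n) = 0 := by
    rw [map_pow, hσ2, zero_pow (by omega)]
  set a : R := ((y.1 0 0).val : R) with hadef
  set b : R := ((y.1 0 1).val : R) with hbdef
  set c : R := ((y.1 1 0).val : R) with hcdef
  set d : R := ((y.1 1 1).val : R) with hddef
  have ha : φ a = y.1 0 0 := cast_lift _ _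
  have hb : φ b = y.1 0 1 := cast_lift _ _
  have hc : φ c = y.1 1 0 := cast_lift _ _
  have hd : φ d = y.1 1 1 := cast_lift _ _
  have hdet : φ (a*d - b*c) = 1 := by
    rw [map_sub, _root_.map_mul, _root_.map_mul, ha, hb, hc, hd]
    have := y.2
    rw [Matrix.det_fin_two] at this
    exact this
  obtain ⟨u, hu⟩ := cast_one _ hdet
  push_cast at hu
  have hσdet : σ a * σ d - σ b * σ c = 1 := by
    have h2 : σ (a*d - b*c) = 1 := by
      rw [hu, map_add, _root_.map_mul, _root_.map_one, hσ2n, zero_mul, add_zero]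
    rwa [map_sub, _root_.map_mul, _root_.map_mul] at h2
  have hcases : (σ a = 1 ∧ σ d = 1) ∨ (σ b = 1 ∧ σ c = 1) := by
    revert hσdet
    generalize σ a = p; generalize σ b = q; generalize σ c = r; generalize σ d = s
    revert p q r s; decide
  have hφ2n : ∀ v : R, φ ((2:R)^n * v) = 0 := by
    intro v
    rw [_root_.map_mul, map_pow]
    have hx1 : ((2:ℕ) : ZMod (2^n)) ^ n = 0 := by
      have := ZMod.natCast_self (2^n); push_cast at this; exact_mod_cast this
    have h2 : (φ (2:R)) = ((2:ℕ) : ZMod (2^n)) := by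
      rw [show (2:R) = ((2:ℕ):R) by push_cast; ring, map_natCast]
    rw [h2, hx1, zero_mul]
  rcases hcases with ⟨ha1, -⟩ | ⟨hb1, -⟩
  · obtain ⟨s, hs⟩ := cast_zero (N := 2^(n+1)) (dvd_pow_self 2 (Nat.succ_ne_zero n))
      (v := a - 1) (by rw [map_sub, _root_.map_one, ha1, sub_self])
    push_cast at hs
    refine ⟨⟨!![a, b; c, d - 2^n * u], by
      rw [Matrix.det_fin_two_of]
      linear_combination hu - ((2:R)^n * u) * hs - (u*s) * htwo⟩, ?_⟩
    apply Subtype.ext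
    show Matrix.map _ φ = y.1
    rw [Matrix.eta_fin_two y.1]
    ext i j
    fin_cases i <;> fin_cases j <;>
      simp [Matrix.map_apply, ha, hb, hc, map_sub, hd, hφ2n]
  · obtain ⟨s, hs⟩ := cast_zero (N := 2^(n+1)) (dvd_pow_self 2 (Nat.succ_ne_zero n))
      (v := b - 1) (by rw [map_sub, _root_.map_one, hb1, sub_self])
    push_cast at hs
    refine ⟨⟨!![a, b; c + 2^n * u, d], by
      rw [Matrix.det_fin_two_of]
      linear_combination hu - ((2:R)^n * u) * hs - (u*s) * htwo⟩, ?_⟩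
    apply Subtype.ext
    show Matrix.map _ φ = y.1
    rw [Matrix.eta_fin_two y.1]
    ext i j
    fin_cases i <;> fin_cases j <;>
      simp [Matrix.map_apply, ha, hb, map_add, hc, hd, hφ2n]

instance : DecidableEq (SL (2^2)) :=
  show DecidableEq {A : Matrix (Fin 2) (Fin 2) (ZMod (2^2)) // A.det = 1} from inferInstance
instance : DecidableEq (SL (2^1)) :=
  show DecidableEq {A : Matrix (Fin 2) (Fin 2) (ZMod (2^1)) // A.det = 1} from inferInstance

lemma sq4 : ∀ x : SL (2^2), red (show 2^1 ∣ 2^2 by norm_num) x = 1 → x^2 = 1 := by decide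

lemma comm4 : ∀ x y : SL (2^2), red (show 2^1 ∣ 2^2 by norm_num) x = 1 →
    red (show 2^1 ∣ 2^2 by norm_num) y = 1 → x * y = y * x := by decide

lemma closure_le_ker (e : ℕ) (he : 2 ≤ e) (h1 : 2^1 ∣ 2^e) (h4 : 2^2 ∣ 2^e) :
    Subgroup.closure (gens e h1) ≤ MonoidHom.ker (red h4) := by
  rw [Subgroup.closure_le]
  rintro x (⟨a, ha, rfl⟩ | ⟨a, ha, b, hb, rfl⟩)
  · rw [SetLike.mem_coe, MonoidHom.mem_ker, map_pow]
    apply sq4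
    rw [red_red]
    exact ha
  · rw [SetLike.mem_coe, MonoidHom.mem_ker, map_commutatorElement]
    have hcomm := comm4 (red h4 a) (red h4 b) (by rw [red_red]; exact ha) (by rw [red_red]; exact hb)
    exact commutatorElement_eq_one_iff_commute.mpr hcomm

lemma red_self {N : ℕ} (h : N ∣ N) (x : SL N) : red h x = x := by
  apply Subtype.ext
  show x.1.map (ZMod.castHom h (ZMod N)) = x.1
  have : ZMod.castHom h (ZMod N) = RingHom.id (ZMod N) := ZMod.castHom_self
  rw [this]
  exact Matrix.map_id x.1

lemma ker_le_closure : ∀ (e : ℕ), 2 ≤ e → ∀ (h1 : 2^1 ∣ 2^e) (h4 : 2^2 ∣ 2^e),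
    MonoidHom.ker (red h4) ≤ Subgroup.closure (gens e h1) := by
  intro e he
  induction e, he using Nat.le_induction with
  | base =>
    intro h1 h4 x hx
    rw [MonoidHom.mem_ker, red_self] at hx
    rw [hx]
    exact Subgroup.one_mem _
  | succ n hn IH =>
    intro h1 h4 k hk
    have h1n : (2:ℕ)^1 ∣ 2^n := pow_dvd_pow 2 (by omega)
    have h4n : (2:ℕ)^2 ∣ 2^n := pow_dvd_pow 2 (by omega)
    rw [MonoidHom.mem_ker] at hk
    have hπk : red (pow_dvd_pow 2 (Nat.le_succ n)) k ∈ MonoidHom.ker (red h4n) := by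
      rw [MonoidHom.mem_ker, red_red]
      exact hk
    have hK := IH h1n h4n hπk
    have lift : ∀ w, w ∈ Subgroup.closure (gens n h1n) →
        ∃ x ∈ Subgroup.closure (gens (n+1) h1), red (pow_dvd_pow 2 (Nat.le_succ n)) x = w := by
      intro w hw
      refine Subgroup.closure_induction ?_ ?_ ?_ ?_ hw
      · rintro s (⟨a, ha, rfl⟩ | ⟨a, ha, b, hb, rfl⟩)
        · obtain ⟨x, hx⟩ := red_surj n (by omega) a
          have hmem : x ∈ (red h1).ker := by
            rw [MonoidHom.mem_ker]
            have hkx : red h1n (red (pow_dvd_pow 2 (Nat.le_succ n)) x) = 1 := by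
              rw [hx]; exact ha
            rwa [red_red] at hkx
          exact ⟨x^2, Subgroup.subset_closure (Or.inl ⟨x, hmem, rfl⟩), by rw [map_pow, hx]⟩
        · obtain ⟨x, hx⟩ := red_surj n (by omega) a
          obtain ⟨x2, hx2⟩ := red_surj n (by omega) b
          have hmem : x ∈ (red h1).ker := by
            rw [MonoidHom.mem_ker]
            have hkx : red h1n (red (pow_dvd_pow 2 (Nat.le_succ n)) x) = 1 := by
              rw [hx]; exact ha
            rwa [red_red] at hkx
          have hmem2 : x2 ∈ (red h1).ker := by
            rw [MonoidHom.mem_ker]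
            have hkx : red h1n (red (pow_dvd_pow 2 (Nat.le_succ n)) x2) = 1 := by
              rw [hx2]; exact hb
            rwa [red_red] at hkx
          exact ⟨⁅x, x2⁆, Subgroup.subset_closure (Or.inr ⟨x, hmem, x2, hmem2, rfl⟩),
            by rw [map_commutatorElement, hx, hx2]⟩
      · exact ⟨1, Subgroup.one_mem _, map_one _⟩
      · rintro w1 w2 - - ⟨x1, hx1, he1⟩ ⟨x2, hx2, he2⟩
        exact ⟨x1 * x2, Subgroup.mul_mem _ hx1 hx2, by rw [map_mul, he1, he2]⟩
      · rintro w - ⟨x, hx, hex⟩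
        exact ⟨x⁻¹, Subgroup.inv_mem _ hx, by rw [map_inv, hex]⟩
    obtain ⟨x, hxcl, hxeq⟩ := lift _ hK
    have hker : k * x⁻¹ ∈ Subgroup.closure (gens (n+1) h1) := by
      apply ker_pi_le n hn h1
      rw [MonoidHom.mem_ker, map_mul, map_inv, hxeq, mul_inv_cancel]
    have := Subgroup.mul_mem _ hker hxcl
    rwa [inv_mul_cancel_right] at this



/-- For `p = 2` and `e ≥ 2`, with `Γ_m = ker(SL₂(ℤ/2^eℤ) → SL₂(ℤ/2^mℤ))`, the subgroup of
`Γ₁` generated by squares and commutators of elements of `Γ₁` equals `Γ₂`. -/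
theorem stmt11 (e : ℕ) (he : 2 ≤ e)
    (Γ₁ Γ₂ : Subgroup (Matrix.SpecialLinearGroup (Fin 2) (ZMod (2 ^ e))))
    (hΓ₁ : Γ₁ = MonoidHom.ker (Matrix.SpecialLinearGroup.map (n := Fin 2)
      (ZMod.castHom (show 2 ^ 1 ∣ 2 ^ e from pow_dvd_pow 2 (by omega)) (ZMod (2 ^ 1)))))
    (hΓ₂ : Γ₂ = MonoidHom.ker (Matrix.SpecialLinearGroup.map (n := Fin 2)
      (ZMod.castHom (show 2 ^ 2 ∣ 2 ^ e from pow_dvd_pow 2 he) (ZMod (2 ^ 2))))) :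
    Subgroup.closure ({x | ∃ a ∈ Γ₁, x = a ^ 2} ∪
      {x | ∃ a ∈ Γ₁, ∃ b ∈ Γ₁, x = ⁅a, b⁆}) = Γ₂ := by
  subst hΓ₁ hΓ₂
  exact le_antisymm
    (closure_le_ker e he (pow_dvd_pow 2 (by omega)) (pow_dvd_pow 2 he))
    (ker_le_closure e he (pow_dvd_pow 2 (by omega)) (pow_dvd_pow 2 he))
end

section
/- Let A be a field, a discrete valuation ring, or a quotient thereof, and equip A^{2n} with the hyperbolic quadratic form Q(x,y) = Σ x_i y_i. Then the orthogonal group O(Q)(A) acts transitively on the set of maximal isotropic free direct summands of A^{2n} of rank n. -/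
def hypQ {A : Type*} [CommRing A] {n : ℕ} (v : (Fin n → A) × (Fin n → A)) : A :=
  ∑ i, v.1 i * v.2 i

namespace HypAux

variable {A : Type*} [CommRing A] {n : ℕ}

/-- Ambient module. -/
abbrev M (A : Type*) [CommRing A] (n : ℕ) := (Fin n → A) × (Fin n → A)

/-- The polar bilinear form of `hypQ`. -/
def hypB : M A n →ₗ[A] M A n →ₗ[A] A :=
  LinearMap.mk₂ A (fun v w => ∑ i, (v.1 i * w.2 i + w.1 i * v.2 i))
    (fun a b w => by
      rw [← Finset.sum_add_distrib]
      exact Finset.sum_congr rfl fun i _ => by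
        simp only [Prod.fst_add, Prod.snd_add, Pi.add_apply]; ring)
    (fun c a w => by
      rw [Finset.smul_sum]
      exact Finset.sum_congr rfl fun i _ => by
        simp only [Prod.smul_fst, Prod.smul_snd, Pi.smul_apply, smul_eq_mul]; ring)
    (fun v a b => by
      rw [← Finset.sum_add_distrib]
      exact Finset.sum_congr rfl fun i _ => by
        simp only [Prod.fst_add, Prod.snd_add, Pi.add_apply]; ring)
    (fun c v a => by
      rw [Finset.smul_sum]
      exact Finset.sum_congr rfl fun i _ => by
        simp only [Prod.smul_fst, Prod.smul_snd, Pi.smul_apply, smul_eq_mul]; ring)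

lemma hypB_apply (v w : M A n) : hypB v w = ∑ i, (v.1 i * w.2 i + w.1 i * v.2 i) :=
  LinearMap.mk₂_apply _ _ _ _

lemma hypB_comm (v w : M A n) : hypB v w = hypB w v := by
  simp only [hypB_apply]; exact Finset.sum_congr rfl fun i _ => by ring

lemma hypQ_add (v w : M A n) : hypQ (v + w) = hypQ v + hypQ w + hypB v w := by
  simp only [hypQ, hypB_apply, ← Finset.sum_add_distrib]
  exact Finset.sum_congr rfl fun i _ => by
    simp only [Prod.fst_add, Prod.snd_add, Pi.add_apply]; ring

lemma hypQ_smul (c : A) (v : M A n) : hypQ (c • v) = c ^ 2 * hypQ v := by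
  simp only [hypQ, Finset.mul_sum]
  exact Finset.sum_congr rfl fun i _ => by
    simp only [Prod.smul_fst, Prod.smul_snd, Pi.smul_apply, smul_eq_mul]; ring

lemma hypB_self (v : M A n) : hypB v v = 2 * hypQ v := by
  simp only [hypQ, hypB_apply, Finset.mul_sum]
  exact Finset.sum_congr rfl fun i _ => by ring

/-- `Q` of a linear combination of pairwise orthogonal isotropic vectors vanishes. -/
lemma hypQ_sum_eq_zero {ι : Type*} (s : Finset ι) (v : ι → M A n) (c : ι → A)
    (h0 : ∀ i ∈ s, hypQ (v i) = 0)
    (hB : ∀ i ∈ s, ∀ j ∈ s, i ≠ j → hypB (v i) (v j) = 0) :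
    hypQ (∑ i ∈ s, c i • v i) = 0 := by
  classical
  induction s using Finset.induction_on with
  | empty => simp [hypQ]
  | @insert a s ha ih =>
    rw [Finset.sum_insert ha, hypQ_add, hypQ_smul,
      h0 a (Finset.mem_insert_self a s), ih (fun i hi => h0 i (Finset.mem_insert_of_mem hi))
        (fun i hi j hj hij => hB i (Finset.mem_insert_of_mem hi) j (Finset.mem_insert_of_mem hj) hij)]
    rw [map_smul, LinearMap.smul_apply, map_sum]
    have : ∀ j ∈ s, hypB (v a) (c j • v j) = 0 := fun j hj => by
      rw [map_smul, hB a (Finset.mem_insert_self a s) j (Finset.mem_insert_of_mem hj)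
        (by rintro rfl; exact ha hj), smul_zero]
    rw [Finset.sum_congr rfl this]
    simp

/-- decompose a vector over the standard basis -/
lemma hyp_decomp (v : M A n) :
    ∑ i, (v.1 i • ((Pi.single i 1 : Fin n → A), (0 : Fin n → A))
      + v.2 i • ((0 : Fin n → A), (Pi.single i 1 : Fin n → A))) = v := by
  classical
  apply Prod.ext <;>
  · simp only [Prod.fst_sum, Prod.snd_sum, Prod.fst_add, Prod.snd_add, Prod.smul_fst,
      Prod.smul_snd, smul_zero, add_zero, zero_add]
    funext k
    simp [Finset.sum_apply, Pi.single_apply, Finset.sum_ite_eq, mul_ite]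

end HypAux
set_option maxHeartbeats 1000000 in
set_option synthInstance.maxHeartbeats 200000 in
open Finset in
lemma exists_orth {A : Type*} [CommRing A] {n : ℕ} (hloc : IsLocalRing A)
    (Z : Submodule A (HypAux.M A n))
    (hcompl : ∃ C, IsCompl Z C) (hiso : ∀ v ∈ Z, hypQ v = 0)
    (hbas : Nonempty (Module.Basis (Fin n) A Z)) :
    ∃ g : HypAux.M A n ≃ₗ[A] HypAux.M A n, (∀ v, hypQ (g v) = hypQ v) ∧
      Submodule.map (g : HypAux.M A n →ₗ[A] HypAux.M A n)
        (LinearMap.range (LinearMap.inl A (Fin n → A) (Fin n → A))) = Z := by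
  classical
  open HypAux in
  obtain ⟨C, hC⟩ := hcompl
  obtain ⟨e⟩ := hbas
  haveI : IsLocalRing A := hloc
  -- B vanishes on Z × Z
  have hBZ : ∀ u ∈ Z, ∀ v ∈ Z, HypAux.hypB u v = 0 := by
    intro u hu v hv
    have h := HypAux.hypQ_add u v
    rw [hiso u hu, hiso v hv, hiso _ (Z.add_mem hu hv)] at h
    simpa using h.symm
  -- the dual family w
  set ψ : Fin n → (HypAux.M A n →ₗ[A] A) :=
    fun i => (e.coord i) ∘ₗ (Z.projectionOnto C hC) with hψ
  set w : Fin n → HypAux.M A n := fun i =>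
    (fun k => ψ i ((0 : Fin n → A), Pi.single k 1),
     fun k => ψ i (Pi.single k 1, (0 : Fin n → A))) with hw
  have hBw : ∀ (i) (v : HypAux.M A n), HypAux.hypB v (w i) = ψ i v := by
    intro i v
    have h1 : HypAux.hypB v (w i)
        = ∑ k, ψ i (v.1 k • ((Pi.single k 1 : Fin n → A), (0 : Fin n → A))
            + v.2 k • ((0 : Fin n → A), (Pi.single k 1 : Fin n → A))) := by
      rw [HypAux.hypB_apply]
      refine Finset.sum_congr rfl fun k _ => ?_
      rw [map_add, map_smul, map_smul, smul_eq_mul, smul_eq_mul]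
      simp only [hw]
      ring
    rw [h1, ← map_sum, HypAux.hyp_decomp]
  have hBew : ∀ i j, HypAux.hypB (↑(e i)) (w j) = if i = j then 1 else 0 := by
    intro i j
    rw [hBw, hψ]
    simp only [LinearMap.comp_apply, Submodule.projectionOnto_apply_left hC (e i),
      Module.Basis.coord_apply, Module.Basis.repr_self, Finsupp.single_apply]
  set φ : HypAux.M A n →ₗ[A] (Fin n → A) :=
    LinearMap.pi fun i => HypAux.hypB (↑(e i) : HypAux.M A n) with hφ
  set σ : (Fin n → A) →ₗ[A] HypAux.M A n :=
    ∑ i, (LinearMap.proj i).smulRight (w i) with hσdef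
  have hσ : ∀ a, σ a = ∑ i, a i • w i := by
    intro a
    simp [hσdef, LinearMap.sum_apply]
  have hφσ : ∀ a, φ (σ a) = a := by
    intro a
    funext i
    rw [hσ]
    simp only [hφ, LinearMap.pi_apply, map_sum, map_smul, smul_eq_mul]
    rw [Finset.sum_congr rfl (fun j _ => by rw [hBew i j])]
    simp
  have hσinj : Function.Injective σ := by
    intro a b hab
    rw [← hφσ a, ← hφσ b, hab]
  have hZker : Z ≤ LinearMap.ker φ := by
    intro z hz
    rw [LinearMap.mem_ker]
    funext i
    exact hBZ _ (e i).2 z hz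
  set Kφ := LinearMap.ker φ with hKφ
  set Rng := LinearMap.range σ with hRng
  have hkc : IsCompl Kφ Rng := by
    constructor
    · rw [disjoint_iff, eq_bot_iff]
      rintro x ⟨hx1, a, rfl⟩
      have : a = 0 := by rw [← hφσ a]; exact hx1
      simp [this]
    · rw [codisjoint_iff, eq_top_iff]
      intro x _
      have hx : x = (x - σ (φ x)) + σ (φ x) := by abel
      rw [hx]
      refine Submodule.add_mem_sup ?_ ⟨φ x, rfl⟩
      rw [LinearMap.mem_ker, map_sub, hφσ, sub_self]
  set K := C ⊓ Kφ with hKdef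
  have hZK_sup : Z ⊔ K = Kφ := by
    have h := sup_inf_assoc_of_le (y := C) (z := Kφ) hZker
    rw [hC.codisjoint.eq_top, top_inf_eq] at h
    rw [hKdef]
    exact h.symm
  have hZK_disj : Z ⊓ K = ⊥ := by
    rw [← le_bot_iff]
    calc Z ⊓ K ≤ Z ⊓ C := inf_le_inf_left _ inf_le_left
      _ = ⊥ := hC.disjoint.eq_bot
  -- K is finite projective, hence free, hence of rank 0, hence trivial
  have hKbot : K = ⊥ := by
    set jmap : (Z × K) →ₗ[A] HypAux.M A n := Z.subtype.coprod K.subtype with hjmap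
    have hjinj : Function.Injective jmap := by
      intro p q hpq
      simp only [hjmap, LinearMap.coprod_apply, Submodule.coe_subtype] at hpq
      have h2 : (↑(p.1 - q.1) : HypAux.M A n) = -(↑(p.2 - q.2) : HypAux.M A n) := by
        push_cast
        linear_combination (norm := abel) hpq
      have hm : (↑(p.1 - q.1) : HypAux.M A n) ∈ Z ⊓ K := by
        refine ⟨(p.1 - q.1).2, ?_⟩
        rw [h2]
        exact K.neg_mem (p.2 - q.2).2
      rw [hZK_disj, Submodule.mem_bot] at hm
      have h1 : p.1 = q.1 := by
        have hz : p.1 - q.1 = 0 := by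
          apply Subtype.ext; simpa using hm
        rwa [sub_eq_zero] at hz
      have h2' : p.2 = q.2 := by
        have hz : p.2 - q.2 = 0 := by
          apply Subtype.ext
          have hb := hm
          rw [h2, neg_eq_zero] at hb
          simpa using hb
        rwa [sub_eq_zero] at hz
      exact Prod.ext h1 h2'
    have hjrange : LinearMap.range jmap = Kφ := by
      rw [hjmap, LinearMap.range_coprod, Submodule.range_subtype, Submodule.range_subtype,
        hZK_sup]
    set E : (Z × K) ≃ₗ[A] Kφ :=
      (LinearEquiv.ofInjective jmap hjinj).trans (LinearEquiv.ofEq _ _ hjrange) with hE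
    have hEval : ∀ p : Z × K, (↑(E p) : HypAux.M A n) = ↑p.1 + ↑p.2 := by
      intro p
      rfl
    set pmap : HypAux.M A n →ₗ[A] HypAux.M A n := σ ∘ₗ φ with hpmap
    set qmap : HypAux.M A n →ₗ[A] Kφ := (LinearMap.id - pmap).codRestrict Kφ (fun x => by
      rw [LinearMap.mem_ker, LinearMap.sub_apply, LinearMap.id_apply, map_sub, hpmap,
        LinearMap.comp_apply, hφσ, sub_self]) with hqmap
    set tmap : HypAux.M A n →ₗ[A] K :=
      (LinearMap.snd A Z K) ∘ₗ (E.symm : Kφ →ₗ[A] (Z × K)) ∘ₗ qmap with htmap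
    have hts : ∀ k : K, tmap (↑k) = k := by
      intro k
      have hk1 : (↑k : HypAux.M A n) ∈ Kφ := (inf_le_right : C ⊓ Kφ ≤ Kφ) k.2
      have hq : qmap ↑k = ⟨↑k, hk1⟩ := by
        apply Subtype.ext
        simp only [hqmap, LinearMap.codRestrict_apply, LinearMap.sub_apply, LinearMap.id_apply,
          hpmap, LinearMap.comp_apply]
        have : φ (↑k : HypAux.M A n) = 0 := hk1
        rw [this, map_zero, sub_zero]
      have hE0 : E ((0 : Z), k) = ⟨↑k, hk1⟩ := by
        apply Subtype.ext
        rw [hEval]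
        simp
      rw [htmap, LinearMap.comp_apply, LinearMap.comp_apply, hq, ← hE0,
        LinearEquiv.coe_coe, LinearEquiv.symm_apply_apply]
      rfl
    have htsurj : Function.Surjective tmap := fun k => ⟨↑k, hts k⟩
    haveI : Module.Finite A K := Module.Finite.of_surjective tmap htsurj
    haveI : Module.Projective A K :=
      Module.Projective.of_split K.subtype tmap (LinearMap.ext fun k => hts k)
    haveI : Module.FinitePresentation A K := Module.finitePresentation_of_projective A K
    haveI : Module.Flat A K := Module.Flat.of_projective
    haveI : Module.Free A K := Module.free_of_flat_of_isLocalRing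
    set m := Fintype.card (Module.Free.ChooseBasisIndex A K) with hm
    set bK : Module.Basis (Fin m) A K := (Module.Free.chooseBasis A K).reindex (Fintype.equivFin _)
      with hbK
    have pe : ∀ a b : ℕ, ((Fin a → A) × (Fin b → A)) ≃ₗ[A] (Fin (a + b) → A) := fun a b =>
      (LinearEquiv.sumArrowLequivProdArrow (Fin a) (Fin b) A A).symm.trans
        (LinearEquiv.funCongrLeft A A finSumFinEquiv.symm)
    have big : ((Fin n → A) × ((Fin m → A) × (Fin n → A))) ≃ₗ[A] HypAux.M A n :=
      (((e.equivFun.symm.prodCongr (bK.equivFun.symm.prodCongr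
          (LinearEquiv.ofInjective σ hσinj))).trans
        (LinearEquiv.prodAssoc A Z K Rng).symm).trans
        (E.prodCongr (LinearEquiv.refl A Rng))).trans
        (Submodule.prodEquivOfIsCompl Kφ Rng hkc)
    have hfin : ((Fin (n + (m + n)) → A) ≃ₗ[A] (Fin (n + n) → A)) :=
      ((((pe n (m + n)).symm.trans
        ((LinearEquiv.refl A (Fin n → A)).prodCongr (pe m n).symm)).trans big).trans
        ((LinearEquiv.refl A (Fin n → A)).prodCongr (LinearEquiv.refl A (Fin n → A)))).trans (pe n n)
    haveI : Nontrivial A := hloc.toNontrivial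
    have hmn : n + (m + n) = n + n := eq_of_fin_equiv A hfin
    have hm0 : m = 0 := by omega
    haveI : Subsingleton K := by
      have bK0 : Module.Basis (Fin 0) A K := bK.reindex (finCongr hm0)
      haveI : IsEmpty (Fin 0) := inferInstance
      exact Equiv.subsingleton bK0.repr.toEquiv
    rw [eq_bot_iff]
    intro x hx
    have : (⟨x, hx⟩ : K) = 0 := Subsingleton.elim _ _
    simpa using congrArg (Subtype.val) this
  have hZR : Z ⊔ Rng = ⊤ := by
    have h1 : Kφ ⊔ Rng = ⊤ := hkc.codisjoint.eq_top
    rwa [← hZK_sup, hKbot, sup_bot_eq] at h1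
    -- corrected dual family f
  set z : Fin n → HypAux.M A n := fun i => -(hypQ (w i) • (↑(e i) : HypAux.M A n))
      - ∑ j ∈ Finset.univ.filter (fun j => j < i),
          HypAux.hypB (w i) (w j) • (↑(e j) : HypAux.M A n) with hz
  set f : Fin n → HypAux.M A n := fun i => w i + z i with hf
  have hzZ : ∀ i, z i ∈ Z := fun i => Z.sub_mem (Z.neg_mem (Z.smul_mem _ (e i).2))
      (Submodule.sum_mem _ fun j _ => Z.smul_mem _ (e j).2)
  have hBef : ∀ i j, HypAux.hypB (↑(e i) : HypAux.M A n) (f j) = if i = j then 1 else 0 := by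
    intro i j
    rw [hf]
    simp only [map_add]
    rw [hBZ _ (e i).2 _ (hzZ j), add_zero, hBew]
  have hBwz : ∀ i k, HypAux.hypB (w k) (z i)
      = -(hypQ (w i) * (if i = k then 1 else 0))
        - (if k < i then HypAux.hypB (w i) (w k) else 0) := by
    intro i k
    rw [hz]
    simp only [map_sub, map_neg, map_smul, map_sum, smul_eq_mul]
    congr 1
    · rw [HypAux.hypB_comm (w k) (↑(e i) : HypAux.M A n), hBew]
    · rw [Finset.sum_congr rfl (fun j _ => by
        rw [HypAux.hypB_comm (w k) (↑(e j) : HypAux.M A n), hBew j k, mul_ite, mul_one, mul_zero])]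
      rw [Finset.sum_ite_eq' (Finset.univ.filter (fun j => j < i)) k
        (fun j => HypAux.hypB (w i) (w j))]
      simp
  have hQf : ∀ i, hypQ (f i) = 0 := by
    intro i
    rw [hf]
    rw [HypAux.hypQ_add, hiso _ (hzZ i), hBwz i i, if_pos rfl, if_neg (lt_irrefl i)]
    ring
  have hBff : ∀ i k, HypAux.hypB (f i) (f k) = 0 := by
    intro i k
    have expand : HypAux.hypB (f i) (f k)
        = HypAux.hypB (w i) (w k) + HypAux.hypB (w i) (z k)
          + (HypAux.hypB (w k) (z i) + HypAux.hypB (z i) (z k)) := by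
      rw [hf]
      simp only [map_add, LinearMap.add_apply]
      rw [HypAux.hypB_comm (z i) (w k)]
      ring
    rw [expand, hBZ _ (hzZ i) _ (hzZ k), hBwz k i, hBwz i k, add_zero]
    rcases lt_trichotomy i k with h | h | h
    · rw [if_neg (ne_of_lt h).symm, if_pos h, if_neg (ne_of_lt h), if_neg (asymm h),
        HypAux.hypB_comm (w i) (w k)]
      ring
    · subst h
      rw [if_neg (lt_irrefl i), HypAux.hypB_self]
      simp only [if_true, mul_one, ite_true, eq_self_iff_true]
      ring
    · rw [if_neg (ne_of_lt h), if_neg (asymm h), if_neg (ne_of_lt h).symm, if_pos h]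
      ring
  -- the linear map g0
  set F1 : (Fin n → A) →ₗ[A] HypAux.M A n :=
    ∑ i, (LinearMap.proj i).smulRight (↑(e i) : HypAux.M A n) with hF1
  set F2 : (Fin n → A) →ₗ[A] HypAux.M A n :=
    ∑ i, (LinearMap.proj i).smulRight (f i) with hF2
  set g0 : HypAux.M A n →ₗ[A] HypAux.M A n :=
    F1 ∘ₗ (LinearMap.fst A (Fin n → A) (Fin n → A))
      + F2 ∘ₗ (LinearMap.snd A (Fin n → A) (Fin n → A)) with hg0def
  have hg0 : ∀ v : HypAux.M A n,
      g0 v = (∑ i, v.1 i • (↑(e i) : HypAux.M A n)) + ∑ i, v.2 i • f i := by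
    intro v
    simp [hg0def, hF1, hF2, LinearMap.sum_apply]
  have hBg0 : ∀ (v u : HypAux.M A n), HypAux.hypB (g0 v) u
      = (∑ j, v.1 j * HypAux.hypB (↑(e j) : HypAux.M A n) u)
        + ∑ j, v.2 j * HypAux.hypB (f j) u := by
    intro v u
    rw [show HypAux.hypB (g0 v) u = HypAux.hypB.flip u (g0 v) from rfl, hg0, map_add,
      map_sum, map_sum]
    simp [LinearMap.flip_apply]
  have hgl : ∀ v : HypAux.M A n,
      ((fun i => HypAux.hypB (g0 v) (f i),
        fun i => HypAux.hypB (g0 v) (↑(e i) : HypAux.M A n)) : HypAux.M A n) = v := by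
    intro v
    have hee : ∀ j i, HypAux.hypB (↑(e j) : HypAux.M A n) (↑(e i) : HypAux.M A n) = 0 :=
      fun j i => hBZ _ (e j).2 _ (e i).2
    have hfe : ∀ j i, HypAux.hypB (f j) (↑(e i) : HypAux.M A n) = if i = j then 1 else 0 :=
      fun j i => by rw [HypAux.hypB_comm, hBef]
    have h1 : ∀ i, HypAux.hypB (g0 v) (f i) = v.1 i := by
      intro i
      rw [hBg0]
      simp [hBef, hBff, mul_ite]
    have h2 : ∀ i, HypAux.hypB (g0 v) (↑(e i) : HypAux.M A n) = v.2 i := by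
      intro i
      rw [hBg0]
      simp [hee, hfe, mul_ite]
    exact Prod.ext (funext h1) (funext h2)
  have hinj : Function.Injective g0 := by
    intro a b hab
    rw [← hgl a, ← hgl b, hab]
  have hZle : Z ≤ LinearMap.range g0 := by
    intro u hu
    refine ⟨(e.equivFun ⟨u, hu⟩, 0), ?_⟩
    rw [hg0]
    simp only [Pi.zero_apply, zero_smul, Finset.sum_const_zero, add_zero]
    have h2 := congrArg (Z.subtype) (e.sum_equivFun ⟨u, hu⟩)
    have h3 := congrArg Subtype.val (e.sum_equivFun ⟨u, hu⟩)
    simp only [Submodule.coe_sum, Submodule.coe_smul] at h3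
    exact h3
  have hfle : ∀ i, f i ∈ LinearMap.range g0 := by
    intro i
    refine ⟨(0, Pi.single i 1), ?_⟩
    rw [hg0]
    simp [Pi.single_apply, ite_smul, Finset.sum_ite_eq']
  have hwle : ∀ i, w i ∈ LinearMap.range g0 := by
    intro i
    have hwi : w i = f i - z i := by
      simp only [hf]
      exact (add_sub_cancel_right (w i) (z i)).symm
    rw [hwi]
    exact Submodule.sub_mem _ (hfle i) (hZle (hzZ i))
  have hRle : Rng ≤ LinearMap.range g0 := by
    rintro u ⟨a, rfl⟩
    rw [hσ]
    exact Submodule.sum_mem _ fun i _ => Submodule.smul_mem _ _ (hwle i)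
  have hsurj : Function.Surjective g0 := by
    rw [← LinearMap.range_eq_top]
    exact top_unique (hZR ▸ sup_le hZle hRle)
  have hQg : ∀ v, hypQ (g0 v) = hypQ v := by
    intro v
    rw [hg0 v, HypAux.hypQ_add]
    rw [hiso _ (Submodule.sum_mem _ fun i _ => Z.smul_mem _ (e i).2)]
    rw [HypAux.hypQ_sum_eq_zero Finset.univ f v.2 (fun i _ => hQf i)
      (fun i _ j _ hij => hBff i j)]
    have hB : HypAux.hypB (∑ i, v.1 i • (↑(e i) : HypAux.M A n)) (∑ j, v.2 j • f j)
        = ∑ i, v.1 i * v.2 i := by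
      rw [show HypAux.hypB (∑ i, v.1 i • (↑(e i) : HypAux.M A n)) (∑ j, v.2 j • f j)
          = HypAux.hypB.flip (∑ j, v.2 j • f j)
              (∑ i, v.1 i • (↑(e i) : HypAux.M A n)) from rfl,
        map_sum]
      refine Finset.sum_congr rfl fun i _ => ?_
      rw [map_smul, smul_eq_mul]
      congr 1
      rw [LinearMap.flip_apply, map_sum]
      simp [hBef, mul_ite]
    rw [hB]
    simp [hypQ]
  set g : HypAux.M A n ≃ₗ[A] HypAux.M A n := LinearEquiv.ofBijective g0 ⟨hinj, hsurj⟩ with hg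
  refine ⟨g, fun v => hQg v, ?_⟩
  apply le_antisymm
  · rintro u ⟨x, ⟨a, rfl⟩, rfl⟩
    show g0 (LinearMap.inl A (Fin n → A) (Fin n → A) a) ∈ Z
    rw [hg0]
    simp only [LinearMap.inl_apply, Pi.zero_apply, zero_smul, Finset.sum_const_zero, add_zero]
    exact Submodule.sum_mem _ fun i _ => Z.smul_mem _ (e i).2
  · intro u hu
    refine ⟨LinearMap.inl A _ _ (e.equivFun ⟨u, hu⟩), ⟨_, rfl⟩, ?_⟩
    show g0 _ = u
    rw [hg0]
    simp only [LinearMap.inl_apply, Pi.zero_apply, zero_smul, Finset.sum_const_zero, add_zero]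
    have h2 := congrArg (Z.subtype) (e.sum_equivFun ⟨u, hu⟩)
    have h3 := congrArg Subtype.val (e.sum_equivFun ⟨u, hu⟩)
    simp only [Submodule.coe_sum, Submodule.coe_smul] at h3
    exact h3

/-- If `A` is a field, a discrete valuation ring, or a quotient thereof, then the orthogonal
group of the hyperbolic form on `A^{2n}` acts transitively on the maximal isotropic free
direct summands of rank `n`. -/
theorem stmt15 (A : Type*) [CommRing A]
    (hA : IsField A ∨
      ∃ (R : Type) (_ : CommRing R) (_ : IsDomain R) (_ : IsDiscreteValuationRing R)
        (f : R →+* A), Function.Surjective f)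
    (n : ℕ)
    (Z W : Submodule A ((Fin n → A) × (Fin n → A)))
    (hZ : (∃ C, IsCompl Z C) ∧ (∀ v ∈ Z, hypQ v = 0) ∧ Nonempty (Module.Basis (Fin n) A Z))
    (hW : (∃ C, IsCompl W C) ∧ (∀ v ∈ W, hypQ v = 0) ∧ Nonempty (Module.Basis (Fin n) A W)) :
    ∃ g : ((Fin n → A) × (Fin n → A)) ≃ₗ[A] ((Fin n → A) × (Fin n → A)),
      (∀ v, hypQ (g v) = hypQ v) ∧
        Submodule.map (g : ((Fin n → A) × (Fin n → A)) →ₗ[A] ((Fin n → A) × (Fin n → A))) Z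
          = W := by
  rcases subsingleton_or_nontrivial A with hsub | hnt
  · haveI : Subsingleton ((Fin n → A) × (Fin n → A)) := inferInstance
    refine ⟨LinearEquiv.refl A _, fun v => rfl, ?_⟩
    have hZW : Z = W := by
      ext x
      have hx : x = 0 := Subsingleton.elim x 0
      subst hx
      simp
    rw [LinearEquiv.refl_toLinearMap, Submodule.map_id, hZW]
  · have hloc : IsLocalRing A := by
      rcases hA with hf | ⟨R, _, _, _, f, hf⟩
      · letI := hf.toField
        infer_instance
      · exact IsLocalRing.of_surjective' f hf
    obtain ⟨gZ, hgZQ, hgZ⟩ := exists_orth hloc Z hZ.1 hZ.2.1 hZ.2.2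
    obtain ⟨gW, hgWQ, hgW⟩ := exists_orth hloc W hW.1 hW.2.1 hW.2.2
    refine ⟨gZ.symm.trans gW, fun v => ?_, ?_⟩
    · rw [LinearEquiv.trans_apply, hgWQ]
      conv_rhs => rw [← LinearEquiv.apply_symm_apply gZ v, hgZQ]
    · have hL : Submodule.map ((gZ.symm : _ ≃ₗ[A] _) : _ →ₗ[A] _) Z
        = LinearMap.range (LinearMap.inl A (Fin n → A) (Fin n → A)) := by
        rw [← hgZ, ← Submodule.map_comp]
        convert Submodule.map_id _
        ext v <;> simp
      rw [LinearEquiv.coe_trans, Submodule.map_comp, hL, hgW]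
end
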